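/- arXiv:2603.23316 — 8 statements merged into one kernel-verified Lean document; each statement's English description precedes it below -/
import Mathlib

section
/- Let A and B be two distinct nonempty subsets of ℕ. Then the observable distance between the singleton geometric data sets ∗_A and ∗_B equals 1: d_conc(∗_A, ∗_B) = 1. Consequently the family {∗_A : A ⊆ ℕ nonempty} is an uncountable subset of the space of geometric data sets any two distinct members of which are at d_conc-distance 1, so the space of (isomorphism classes of) geometric data sets with the observable distance is not separable. -/
open MeasureTheory Topology Filter ENNReal

noncomputable section

/-- The Ky Fan (extended) pseudometric between two maps, w.r.t. a measure `π`:
`inf {ε ≥ 0 | π {ω | d (u ω) (v ω) > ε} ≤ ε}`. -/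
def kyFan {Ω E : Type*} [MeasurableSpace Ω] [PseudoEMetricSpace E]
    (π : Measure Ω) (u v : Ω → E) : ℝ≥0∞ :=
  sInf {ε : ℝ≥0∞ | π {ω | ε < edist (u ω) (v ω)} ≤ ε}

/-- Hausdorff distance between two sets w.r.t. an abstract extended pseudometric `d`. -/
def hausd {α : Type*} (d : α → α → ℝ≥0∞) (A B : Set α) : ℝ≥0∞ :=
  max (⨆ a : A, ⨅ b : B, d a b) (⨆ b : B, ⨅ a : A, d a b)

/-- The sup (extended) pseudometric `d∞^A` over a subset `A`. -/
def dInfty {α β : Type*} [PseudoEMetricSpace β] (A : Set α) (u v : α → β) : ℝ≥0∞ :=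
  ⨆ a : A, edist (u a) (v a)

/-- A geometric data set: a complete separable metric space whose distance is the
supremum of feature differences over a nonempty family `F` of real-valued functions,
equipped with a fully supported Borel probability measure. -/
structure GDS where
  carrier : Type
  met : MetricSpace carrier
  cms : CompleteSpace carrier
  sep : TopologicalSpace.SeparableSpace carrier
  msp : MeasurableSpace carrier
  bor : BorelSpace carrier
  F : Set (carrier → ℝ)
  F_nonempty : F.Nonempty
  dist_isLUB : ∀ x y : carrier, IsLUB ((fun f => |f x - f y|) '' F) (dist x y)
  μ : Measure carrier
  prob : IsProbabilityMeasure μ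
  full_support : ∀ U : Set carrier, IsOpen U → U.Nonempty → 0 < μ U

attribute [instance] GDS.met GDS.cms GDS.sep GDS.msp GDS.bor GDS.prob

/-- A coupling of the measures of two geometric data sets. -/
def GDS.Coupling (X Y : GDS) (π : Measure (X.carrier × Y.carrier)) : Prop :=
  IsProbabilityMeasure π ∧ π.map Prod.fst = X.μ ∧ π.map Prod.snd = Y.μ

/-- A parameter of a measure `μ`: a Borel measurable map from `[0,1]` (with Lebesgue
measure) pushing the Lebesgue measure forward to `μ`. -/
def IsParam {X : Type*} [MeasurableSpace X] (μ : Measure X)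
    (φ : Set.Icc (0:ℝ) 1 → X) : Prop :=
  Measurable φ ∧ Measure.map φ volume = μ

/-- The observable distance between two geometric data sets. -/
def dConc (X Y : GDS) : ℝ≥0∞ :=
  ⨅ (φ : Set.Icc (0:ℝ) 1 → X.carrier) (_ : IsParam X.μ φ)
    (ψ : Set.Icc (0:ℝ) 1 → Y.carrier) (_ : IsParam Y.μ ψ),
    hausd (kyFan (volume : Measure (Set.Icc (0:ℝ) 1)))
      ((· ∘ φ) '' X.F) ((· ∘ ψ) '' Y.F)

/-- `d_conc^π`, the Hausdorff distance w.r.t. the Ky Fan metric of a coupling `π`. -/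
def dConcCoupling (X Y : GDS) (π : Measure (X.carrier × Y.carrier)) : ℝ≥0∞ :=
  hausd (kyFan π) ((· ∘ Prod.fst) '' X.F) ((· ∘ Prod.snd) '' Y.F)

/-- The Prohorov distance between two Borel measures. -/
def prohorov {Z : Type*} [PseudoEMetricSpace Z] [MeasurableSpace Z]
    (μ ν : Measure Z) : ℝ≥0∞ :=
  sInf {ε : ℝ≥0∞ | ∀ A : Set Z, MeasurableSet A →
    ν A ≤ μ {z | EMetric.infEdist z A < ε} + ε}

/-- The `a`-partial diameter of a Borel measure on `ℝ`. -/
def partialDiam (ν : Measure ℝ) (a : ℝ≥0∞) : ℝ≥0∞ :=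
  ⨅ (I : Set ℝ) (_ : MeasurableSet I) (_ : a ≤ ν I), EMetric.diam I

/-- The `κ`-observable diameter `ObsDiam(X; -κ)` of a geometric data set. -/
def obsDiam (X : GDS) (κ : ℝ) : ℝ≥0∞ :=
  ⨆ f : X.F, partialDiam (X.μ.map f) (ENNReal.ofReal (1 - κ))

/-- The distortion of a subset `S ⊆ X × Y`. -/
def distortion {X Y : Type*} [PseudoMetricSpace X] [PseudoMetricSpace Y]
    (S : Set (X × Y)) : ℝ≥0∞ :=
  ⨆ (p : S) (q : S), edist (dist p.1.1 q.1.1) (dist p.1.2 q.1.2)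

/-- `□_π^S(F, G) = max {1 - π S, 2 H_{d∞^S}(F ∘ pr₁, G ∘ pr₂)}`. -/
def boxS (X Y : GDS) (π : Measure (X.carrier × Y.carrier))
    (S : Set (X.carrier × Y.carrier))
    (F : Set (X.carrier → ℝ)) (G : Set (Y.carrier → ℝ)) : ℝ≥0∞ :=
  max (1 - π S) (2 * hausd (dInfty S) ((· ∘ Prod.fst) '' F) ((· ∘ Prod.snd) '' G))

/-- `□_π(F, G)`, infimum of `□_π^S(F, G)` over closed `S`. -/
def boxCoupling (X Y : GDS) (π : Measure (X.carrier × Y.carrier))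
    (F : Set (X.carrier → ℝ)) (G : Set (Y.carrier → ℝ)) : ℝ≥0∞ :=
  ⨅ (S : Set (X.carrier × Y.carrier)) (_ : IsClosed S), boxS X Y π S F G

/-- The box distance between two geometric data sets. -/
def boxDist (X Y : GDS) : ℝ≥0∞ :=
  ⨅ (π : Measure (X.carrier × Y.carrier)) (_ : X.Coupling Y π),
    boxCoupling X Y π X.F Y.F

/-- The distortion `dis π` of a coupling `π`. -/
def disCoupling (X Y : GDS) (π : Measure (X.carrier × Y.carrier)) : ℝ≥0∞ :=
  ⨅ (S : Set (X.carrier × Y.carrier)) (_ : IsClosed S), max (1 - π S) (distortion S)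

/-- `X ⪯ Y` : the geometric data set `Y` dominates `X` (feature order). -/
def GDS.Dominates (Y X : GDS) : Prop :=
  ∃ p : Y.carrier → X.carrier, Measurable p ∧ Y.μ.map p = X.μ ∧
    (· ∘ p) '' X.F ⊆ closure Y.F

/-- The singleton geometric data set `∗_A` associated with a nonempty set `A ⊆ ℝ`. -/
def singletonGDS (A : Set ℝ) (hA : A.Nonempty) : GDS where
  carrier := Unit
  met := inferInstance
  cms := inferInstance
  sep := inferInstance
  msp := inferInstance
  bor := inferInstance
  F := (fun a => fun _ => a) '' A
  F_nonempty := hA.image _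
  dist_isLUB := by
    intro x y
    have h1 : (fun f : Unit → ℝ => |f x - f y|) '' ((fun a => fun _ => a) '' A) = {0} := by
      ext t
      simp only [Set.mem_image, Set.mem_singleton_iff]
      constructor
      · rintro ⟨f, ⟨a, _, rfl⟩, rfl⟩
        simp
      · rintro rfl
        exact ⟨fun _ => hA.choose, ⟨hA.choose, hA.choose_spec, rfl⟩, by simp⟩
    have h2 : dist x y = 0 := by simp [Subsingleton.elim x y]
    rw [h1, h2]
    exact isLUB_singleton
  μ := Measure.dirac ()
  prob := inferInstance
  full_support := by
    intro U _ hne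
    obtain ⟨u, hu⟩ := hne
    have hmem : (() : Unit) ∈ U := by cases u; exact hu
    have : Measure.dirac () U = 1 := Measure.dirac_apply_of_mem hmem
    rw [this]
    exact zero_lt_one


section Aux

instance : IsProbabilityMeasure (volume : Measure (Set.Icc (0:ℝ) 1)) :=
  inferInstanceAs (IsProbabilityMeasure (volume : Measure unitInterval))

lemma nat_edist_ge (n b : ℕ) (h : n ≠ b) : (1:ℝ≥0∞) ≤ edist (n:ℝ) (b:ℝ) := by
  rw [edist_dist, Real.dist_eq]
  apply ENNReal.one_le_ofReal.mpr
  rcases h.lt_or_gt with h | h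
  · rw [abs_sub_comm, abs_of_nonneg (by simp [h.le] : (0:ℝ) ≤ (b:ℝ) - n)]
    have : (n:ℝ) + 1 ≤ b := by exact_mod_cast h
    linarith
  · rw [abs_of_nonneg (by simp [h.le] : (0:ℝ) ≤ (n:ℝ) - b)]
    have : (b:ℝ) + 1 ≤ n := by exact_mod_cast h
    linarith

lemma kyFan_le_one {Ω E : Type*} [MeasurableSpace Ω] [PseudoEMetricSpace E]
    (π : Measure Ω) [IsProbabilityMeasure π] (u v : Ω → E) : kyFan π u v ≤ 1 :=
  sInf_le (by simp [prob_le_one])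

lemma kyFan_const_nat {Ω : Type*} [MeasurableSpace Ω] (π : Measure Ω)
    [IsProbabilityMeasure π] (n b : ℕ) (h : n ≠ b) :
    kyFan π (fun _ => (n:ℝ)) (fun _ => (b:ℝ)) = 1 := by
  refine le_antisymm (kyFan_le_one _ _ _) (le_sInf fun ε hε => ?_)
  by_contra hlt
  push_neg at hlt
  have hset : {ω : Ω | ε < edist (n:ℝ) (b:ℝ)} = Set.univ := by
    ext ω
    simp [lt_of_lt_of_le hlt (nat_edist_ge n b h)]
  simp only [Set.mem_setOf_eq] at hε
  rw [hset, measure_univ] at hε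
  exact absurd hε (not_le.mpr hlt)

lemma GDS.feature_continuous (Y : GDS) {f : Y.carrier → ℝ} (hf : f ∈ Y.F) :
    Continuous f := by
  apply LipschitzWith.continuous (K := 1)
  apply LipschitzWith.of_dist_le_mul
  intro x y
  rw [Real.dist_eq, NNReal.coe_one, one_mul]
  exact (Y.dist_isLUB x y).1 ⟨f, hf, rfl⟩

lemma unitParam (A : Set ℝ) (hA : A.Nonempty) :
    IsParam (singletonGDS A hA).μ (fun _ : Set.Icc (0:ℝ) 1 => ()) := by
  refine ⟨measurable_const, ?_⟩
  show Measure.map (fun _ : Set.Icc (0:ℝ) 1 => (() : Unit)) volume = (singletonGDS A hA).μ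
  rw [Measure.map_const, measure_univ, one_smul]
  rfl

lemma img_const (A : Set ℝ) (hA : A.Nonempty)
    (φ : Set.Icc (0:ℝ) 1 → (singletonGDS A hA).carrier) :
    (· ∘ φ) '' (singletonGDS A hA).F
      = (fun a : ℝ => (fun _ : Set.Icc (0:ℝ) 1 => a)) '' A := by
  show (fun g : Unit → ℝ => g ∘ (φ : Set.Icc (0:ℝ) 1 → Unit)) '' ((fun a : ℝ => fun _ : Unit => a) '' A) = _
  rw [Set.image_image]
  rfl

lemma dConc_singleton (A : Set ℝ) (hA : A.Nonempty) (Y : GDS) :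
    dConc (singletonGDS A hA) Y =
      ⨅ (ψ : Set.Icc (0:ℝ) 1 → Y.carrier) (_ : IsParam Y.μ ψ),
        hausd (kyFan (volume : Measure (Set.Icc (0:ℝ) 1)))
          ((fun a : ℝ => (fun _ : Set.Icc (0:ℝ) 1 => a)) '' A) ((· ∘ ψ) '' Y.F) := by
  apply le_antisymm
  · refine le_iInf fun ψ => le_iInf fun hψ => ?_
    refine (iInf_le _ (fun _ => ())).trans ?_
    refine (iInf_le _ (unitParam A hA)).trans ?_
    refine (iInf_le _ ψ).trans ?_
    refine (iInf_le _ hψ).trans ?_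
    exact le_of_eq (congrArg (fun s => hausd (kyFan (volume : Measure (Set.Icc (0:ℝ) 1))) s ((· ∘ ψ) '' Y.F)) (img_const A hA (fun _ => ())))
  · refine le_iInf fun φ => le_iInf fun _ => le_iInf fun ψ => le_iInf fun hψ => ?_
    refine (iInf_le _ ψ).trans ((iInf_le _ hψ).trans ?_)
    rw [img_const]

lemma dConc_two_singletons (A B : Set ℝ) (hA : A.Nonempty) (hB : B.Nonempty) :
    dConc (singletonGDS A hA) (singletonGDS B hB)
      = hausd (kyFan (volume : Measure (Set.Icc (0:ℝ) 1)))
          ((fun a : ℝ => (fun _ : Set.Icc (0:ℝ) 1 => a)) '' A)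
          ((fun a : ℝ => (fun _ : Set.Icc (0:ℝ) 1 => a)) '' B) := by
  rw [dConc_singleton]
  apply le_antisymm
  · refine (iInf_le _ (fun _ => ())).trans ((iInf_le _ (unitParam B hB)).trans ?_)
    exact le_of_eq (congrArg (fun s => hausd (kyFan (volume : Measure (Set.Icc (0:ℝ) 1))) ((fun a : ℝ => (fun _ : Set.Icc (0:ℝ) 1 => a)) '' A) s) (img_const B hB (fun _ => ())))
  · refine le_iInf fun ψ => le_iInf fun _ => ?_
    rw [img_const B hB ψ]

lemma hausd_consts_eq_one (A B : Set ℕ) (hA : A.Nonempty) (hB : B.Nonempty)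
    (hAB : A ≠ B) :
    hausd (kyFan (volume : Measure (Set.Icc (0:ℝ) 1)))
      ((fun a : ℝ => (fun _ : Set.Icc (0:ℝ) 1 => a)) '' ((Nat.cast : ℕ → ℝ) '' A))
      ((fun a : ℝ => (fun _ : Set.Icc (0:ℝ) 1 => a)) '' ((Nat.cast : ℕ → ℝ) '' B)) = 1 := by
  obtain ⟨a0, ha0⟩ := hA
  obtain ⟨b0, hb0⟩ := hB
  apply le_antisymm
  · apply max_le
    · refine iSup_le fun a => ?_
      refine (iInf_le _ ⟨_, ⟨(b0 : ℝ), ⟨b0, hb0, rfl⟩, rfl⟩⟩).trans (kyFan_le_one _ _ _)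
    · refine iSup_le fun b => ?_
      refine (iInf_le _ ⟨_, ⟨(a0 : ℝ), ⟨a0, ha0, rfl⟩, rfl⟩⟩).trans (kyFan_le_one _ _ _)
  · have key : (∃ n ∈ A, n ∉ B) ∨ (∃ n ∈ B, n ∉ A) := by
      by_contra hc
      push_neg at hc
      exact hAB (Set.Subset.antisymm hc.1 hc.2)
    rcases key with ⟨n, hnA, hnB⟩ | ⟨n, hnB, hnA⟩
    · refine le_trans ?_ (le_max_left _ _)
      refine le_trans ?_ (le_iSup _ ⟨_, ⟨(n : ℝ), ⟨n, hnA, rfl⟩, rfl⟩⟩)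
      refine le_iInf ?_
      rintro ⟨g, ⟨x, ⟨m, hmB, rfl⟩, rfl⟩⟩
      exact (kyFan_const_nat _ n m (fun h => hnB (h ▸ hmB))).ge
    · refine le_trans ?_ (le_max_right _ _)
      refine le_trans ?_ (le_iSup _ ⟨_, ⟨(n : ℝ), ⟨n, hnB, rfl⟩, rfl⟩⟩)
      refine le_iInf ?_
      rintro ⟨g, ⟨x, ⟨m, hmA, rfl⟩, rfl⟩⟩
      have := kyFan_const_nat (volume : Measure (Set.Icc (0:ℝ) 1)) m n
        (fun h => hnA (h ▸ hmA))
      exact this.ge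

lemma extract (A : Set ℕ) (hA : A.Nonempty) (Y : GDS)
    (h : dConc (singletonGDS ((Nat.cast : ℕ → ℝ) '' A) (hA.image _)) Y < 1/2) :
    (∀ n ∈ A, ∃ g ∈ Y.F, ∃ ε : ℝ≥0∞, ε < 1/2 ∧
        Y.μ {y | ε < edist ((n:ℕ):ℝ) (g y)} ≤ ε) ∧
    (∀ g ∈ Y.F, ∃ n ∈ A, ∃ ε : ℝ≥0∞, ε < 1/2 ∧
        Y.μ {y | ε < edist ((n:ℕ):ℝ) (g y)} ≤ ε) := by
  rw [dConc_singleton] at h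
  obtain ⟨ψ, h⟩ := iInf_lt_iff.mp h
  obtain ⟨hψ, h⟩ := iInf_lt_iff.mp h
  rw [hausd, max_lt_iff] at h
  obtain ⟨h1, h2⟩ := h
  have main : ∀ n ∈ A, ∀ g ∈ Y.F,
      kyFan (volume : Measure (Set.Icc (0:ℝ) 1)) (fun _ => ((n:ℕ):ℝ)) (g ∘ ψ) < 1/2 →
      ∃ ε : ℝ≥0∞, ε < 1/2 ∧ Y.μ {y | ε < edist ((n:ℕ):ℝ) (g y)} ≤ ε := by
    intro n hn g hg hk
    obtain ⟨ε, hmem, hε⟩ := sInf_lt_iff.mp hk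
    refine ⟨ε, hε, ?_⟩
    simp only [Set.mem_setOf_eq, Function.comp_apply] at hmem
    have hT : MeasurableSet {y : Y.carrier | ε < edist ((n:ℕ):ℝ) (g y)} := by
      have hc : Continuous fun y : Y.carrier => edist ((n:ℕ):ℝ) (g y) :=
        continuous_const.edist (Y.feature_continuous hg)
      exact measurableSet_lt measurable_const hc.measurable
    have : {ω : Set.Icc (0:ℝ) 1 | ε < edist ((n:ℕ):ℝ) (g (ψ ω))}
        = ψ ⁻¹' {y | ε < edist ((n:ℕ):ℝ) (g y)} := rfl
    rw [this] at hmem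
    rwa [← Measure.map_apply hψ.1 hT, hψ.2] at hmem
  constructor
  · intro n hn
    have ha : (fun _ : Set.Icc (0:ℝ) 1 => ((n:ℕ):ℝ)) ∈
        (fun a : ℝ => (fun _ : Set.Icc (0:ℝ) 1 => a)) '' ((Nat.cast : ℕ → ℝ) '' A) :=
      ⟨(n:ℝ), ⟨n, hn, rfl⟩, rfl⟩
    have := lt_of_le_of_lt (le_iSup _ (⟨_, ha⟩ : _)) h1
    obtain ⟨⟨gψ, ⟨g, hg, rfl⟩⟩, hlt⟩ := iInf_lt_iff.mp this
    exact ⟨g, hg, main n hn g hg hlt⟩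
  · intro g hg
    have hb : g ∘ ψ ∈ (· ∘ ψ) '' Y.F := ⟨g, hg, rfl⟩
    have := lt_of_le_of_lt (le_iSup _ (⟨_, hb⟩ : _)) h2
    obtain ⟨⟨a, ⟨x, ⟨n, hn, rfl⟩, rfl⟩⟩, hlt⟩ := iInf_lt_iff.mp this
    exact ⟨n, hn, main n hn g hg hlt⟩

lemma subset_of_close (A B : Set ℕ) (hA : A.Nonempty) (hB : B.Nonempty) (Y : GDS)
    (h1 : dConc (singletonGDS ((Nat.cast : ℕ → ℝ) '' A) (hA.image _)) Y < 1/2)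
    (h2 : dConc (singletonGDS ((Nat.cast : ℕ → ℝ) '' B) (hB.image _)) Y < 1/2) :
    A ⊆ B := by
  intro n hn
  obtain ⟨g, hg, ε, hε, hμ⟩ := (extract A hA Y h1).1 n hn
  obtain ⟨b, hbB, ε', hε', hμ'⟩ := (extract B hB Y h2).2 g hg
  have hsum : ε + ε' < 1 := by
    have := ENNReal.add_lt_add hε hε'
    rwa [ENNReal.add_halves] at this
  have hne : ∃ y : Y.carrier, edist ((n:ℕ):ℝ) (g y) ≤ ε ∧ edist ((b:ℕ):ℝ) (g y) ≤ ε' := by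
    by_contra hc
    push_neg at hc
    have hcover : (Set.univ : Set Y.carrier) ⊆
        {y | ε < edist ((n:ℕ):ℝ) (g y)} ∪ {y | ε' < edist ((b:ℕ):ℝ) (g y)} := by
      intro y _
      rcases le_or_gt (edist ((n:ℕ):ℝ) (g y)) ε with hy | hy
      · exact Or.inr (hc y hy)
      · exact Or.inl hy
    have : (1:ℝ≥0∞) ≤ ε + ε' := by
      calc (1:ℝ≥0∞) = Y.μ Set.univ := (measure_univ).symm
        _ ≤ Y.μ (_ ∪ _) := measure_mono hcover
        _ ≤ Y.μ _ + Y.μ _ := measure_union_le _ _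
        _ ≤ ε + ε' := add_le_add hμ hμ'
    exact absurd this (not_le.mpr hsum)
  obtain ⟨y, hy1, hy2⟩ := hne
  by_cases hnb : n = b
  · exact hnb ▸ hbB
  · exfalso
    have : edist ((n:ℕ):ℝ) ((b:ℕ):ℝ) ≤ ε + ε' := by
      calc edist ((n:ℕ):ℝ) ((b:ℕ):ℝ)
          ≤ edist ((n:ℕ):ℝ) (g y) + edist (g y) ((b:ℕ):ℝ) := edist_triangle _ _ _
        _ ≤ ε + ε' := add_le_add hy1 (by rwa [edist_comm])
    exact absurd (le_trans (nat_edist_ge n b hnb) this) (not_le.mpr hsum)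

end Aux

/-- For distinct nonempty `A, B ⊆ ℕ`, the observable distance between the
singleton geometric data sets `∗_A` and `∗_B` equals `1`; consequently the space of
geometric data sets with the observable distance is not separable. -/
theorem dConc_singleton_eq_one_and_not_separable
    (A B : Set ℕ) (hA : A.Nonempty) (hB : B.Nonempty) (hAB : A ≠ B) :
    dConc (singletonGDS ((Nat.cast : ℕ → ℝ) '' A) (hA.image _))
        (singletonGDS ((Nat.cast : ℕ → ℝ) '' B) (hB.image _)) = 1 ∧
    ¬ ∃ D : Set GDS, D.Countable ∧
        ∀ X : GDS, ∀ ε : ℝ≥0∞, 0 < ε → ∃ Y ∈ D, dConc X Y < ε := by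
  constructor
  · rw [dConc_two_singletons]
    exact hausd_consts_eq_one A B hA hB hAB
  · rintro ⟨D, hDc, hdense⟩
    have choice : ∀ S : {S : Set ℕ // S.Nonempty}, ∃ Y ∈ D,
        dConc (singletonGDS ((Nat.cast : ℕ → ℝ) '' S.1) (S.2.image _)) Y < 1/2 :=
      fun S => hdense _ (1/2) (by norm_num)
    choose f hfD hflt using choice
    have hinj : Function.Injective f := by
      intro S T hST
      ext1
      apply Set.Subset.antisymm
      · exact subset_of_close S.1 T.1 S.2 T.2 (f S) (hflt S) (hST ▸ hflt T)
      · exact subset_of_close T.1 S.1 T.2 S.2 (f S) (hST ▸ hflt T) (hflt S)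
    have hcnt : Countable {S : Set ℕ // S.Nonempty} := by
      have hD : Countable D := hDc.to_subtype
      exact Function.Injective.countable
        (f := fun S : {S : Set ℕ // S.Nonempty} => (⟨f S, hfD S⟩ : D))
        (fun a b h => hinj (congrArg Subtype.val h))
    have h1 : Set.Countable {S : Set ℕ | S.Nonempty} := Set.countable_coe_iff.mp hcnt
    have h2 : (Set.univ : Set (Set ℕ)).Countable := by
      refine ((h1.union (Set.countable_singleton ∅)).mono ?_)
      intro S _
      rcases S.eq_empty_or_nonempty with h | h
      · exact Or.inr h
      · exact Or.inl h
    have h3 : Countable (Set ℕ) := Set.countable_univ_iff.mp h2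
    obtain ⟨f', hf'⟩ := (countable_iff_exists_injective (Set ℕ)).mp h3
    exact Function.cantor_injective f' hf'
end
end

section
/- Let X and Y be complete separable metric spaces and let S be a nonempty closed subset of X × Y (with the l∞-product metric). Then dis S = 2 · H_{d∞^S}(Lip₁(X) ∘ pr₁, Lip₁(Y) ∘ pr₂), where the left-hand side is the distortion of S and the right-hand side is twice the Hausdorff distance, with respect to the sup pseudometric d∞^S over S, between the family of compositions of 1-Lipschitz real-valued functions on X with the first projection and the family of compositions of 1-Lipschitz real-valued functions on Y with the second projection. -/
open MeasureTheory Topology Filter ENNReal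

noncomputable section

/-- Transfer a 1-Lipschitz function across a relation of bounded distortion. -/
lemma exists_transfer {X Y : Type*} [MetricSpace X] [MetricSpace Y]
    (S : Set (X × Y)) (hne : S.Nonempty) (D : ℝ)
    (hdis : ∀ p ∈ S, ∀ q ∈ S, |dist (Prod.fst p) (Prod.fst q) - dist (Prod.snd p) (Prod.snd q)| ≤ D)
    (f : X → ℝ) (hf : LipschitzWith 1 f) :
    ∃ g : Y → ℝ, LipschitzWith 1 g ∧ ∀ p ∈ S, |f p.1 - g p.2| ≤ D / 2 := by
  haveI : Nonempty S := hne.to_subtype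
  obtain ⟨⟨x₀, y₀⟩, h₀⟩ := hne
  set g0 : Y → ℝ := fun y => ⨅ p : S, (f (p : X × Y).1 + dist y (p : X × Y).2) with hg0
  have hfd : ∀ a b : X, f a - f b ≤ dist a b := by
    intro a b
    have := hf.dist_le_mul a b
    rw [NNReal.coe_one, one_mul, Real.dist_eq] at this
    linarith [abs_le.mp this]
  have hbdd : ∀ y : Y, BddBelow (Set.range fun p : S => f (p : X × Y).1 + dist y (p : X × Y).2) := by
    intro y
    refine ⟨f x₀ - D - dist y y₀, ?_⟩
    rintro r ⟨⟨⟨x, yy⟩, hp⟩, rfl⟩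
    have h1 : f x₀ - f x ≤ dist x₀ x := hfd x₀ x
    have h2 : dist x₀ x ≤ dist y₀ yy + D := by
      have := hdis ⟨x₀, y₀⟩ h₀ ⟨x, yy⟩ hp
      simp only [abs_le] at this
      linarith [this.1]
    have h3 : dist y₀ yy ≤ dist y₀ y + dist y yy := dist_triangle _ _ _
    simp only []
    have : dist y₀ y = dist y y₀ := dist_comm _ _
    linarith
  have hlipkey : ∀ y y' : Y, g0 y - dist y y' ≤ g0 y' := by
    intro y y'
    refine le_ciInf fun p => ?_
    have h1 : g0 y ≤ f (p : X × Y).1 + dist y (p : X × Y).2 := ciInf_le (hbdd y) p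
    have h3 : dist y (p : X × Y).2 ≤ dist y y' + dist y' (p : X × Y).2 := dist_triangle _ _ _
    linarith
  have hg0lip : LipschitzWith 1 g0 := by
    apply LipschitzWith.of_dist_le_mul
    intro y y'
    rw [NNReal.coe_one, one_mul, Real.dist_eq, abs_le]
    have h1 := hlipkey y y'
    have h2 := hlipkey y' y
    have : dist y' y = dist y y' := dist_comm _ _
    constructor <;> linarith
  have hD0 : 0 ≤ D := by
    have := hdis ⟨x₀, y₀⟩ h₀ ⟨x₀, y₀⟩ h₀
    simpa using le_trans (abs_nonneg _) this
  refine ⟨fun y => g0 y + D / 2, ?_, ?_⟩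
  · apply LipschitzWith.of_dist_le_mul
    intro y y'
    simpa [Real.dist_eq, add_sub_add_right_eq_sub] using hg0lip.dist_le_mul y y'
  · rintro ⟨x, y⟩ hp
    have hub : g0 y ≤ f x := by
      have := ciInf_le (hbdd y) (⟨⟨x, y⟩, hp⟩ : S)
      simpa using this
    have hlb : f x - D ≤ g0 y := by
      refine le_ciInf fun q => ?_
      have h1 : f x - f (q : X × Y).1 ≤ dist x (q : X × Y).1 := hfd x _
      have h2 : dist x (q : X × Y).1 ≤ dist y (q : X × Y).2 + D := by
        have := hdis ⟨x, y⟩ hp q q.2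
        simp only [abs_le] at this
        linarith [this.1]
      linarith
    simp only []
    rw [abs_le]
    constructor <;> linarith

set_option maxHeartbeats 1000000 in
/-- For a nonempty closed subset `S ⊆ X × Y` of a product of complete
separable metric spaces, `dis S = 2 H_{d∞^S}(Lip₁(X) ∘ pr₁, Lip₁(Y) ∘ pr₂)`. -/
theorem distortion_eq_two_hausd {X Y : Type*} [MetricSpace X] [CompleteSpace X]
    [TopologicalSpace.SeparableSpace X] [MetricSpace Y] [CompleteSpace Y]
    [TopologicalSpace.SeparableSpace Y]
    (S : Set (X × Y)) (hS : IsClosed S) (hne : S.Nonempty) :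
    distortion S = 2 * hausd (dInfty S)
      ((· ∘ Prod.fst) '' {f : X → ℝ | LipschitzWith 1 f})
      ((· ∘ Prod.snd) '' {g : Y → ℝ | LipschitzWith 1 g}) := by
  classical
  haveI : Nonempty S := hne.to_subtype
  set A := (· ∘ Prod.fst) '' {f : X → ℝ | LipschitzWith 1 f} with hA
  set B := (· ∘ Prod.snd) '' {g : Y → ℝ | LipschitzWith 1 g} with hB
  set H := hausd (dInfty S) A B with hHdef
  have hs1 : (⨆ a : A, ⨅ b : B, dInfty S (a : (X × Y) → ℝ) (b : (X × Y) → ℝ)) ≤ H := by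
    rw [hHdef, hausd]; exact le_max_left _ _
  have hs2 : (⨆ b : B, ⨅ a : A, dInfty S (a : (X × Y) → ℝ) (b : (X × Y) → ℝ)) ≤ H := by
    rw [hHdef, hausd]; exact le_max_right _ _
  apply le_antisymm
  · -- distortion S ≤ 2 * H
    rw [distortion]
    refine iSup_le fun p => iSup_le fun q => ?_
    apply ENNReal.le_of_forall_pos_le_add
    intro ε hε h2H
    have hHlt : H < ⊤ := lt_of_le_of_lt (by
      calc H = 1 * H := (one_mul _).symm
      _ ≤ 2 * H := by gcongr; norm_num) h2H
    set δ : ℝ≥0∞ := (ε : ℝ≥0∞) / 2 with hδ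
    have hδ0 : δ ≠ 0 := by
      simp [hδ, ENNReal.div_eq_zero_iff]
      exact_mod_cast hε.ne'
    have htop : H + δ ≠ ⊤ := by
      apply ENNReal.add_ne_top.2
      exact ⟨hHlt.ne, (ENNReal.div_lt_top ENNReal.coe_ne_top (by norm_num)).ne⟩
    have hlt : H < H + δ := ENNReal.lt_add_right hHlt.ne hδ0
    obtain ⟨⟨x₁, y₁⟩, hp⟩ := p
    obtain ⟨⟨x₂, y₂⟩, hq⟩ := q
    simp only []
    set t := (H + δ).toReal with ht
    -- first transfer: f = dist x₁ ·
    have hamem : (fun r : X × Y => dist x₁ r.1) ∈ A := by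
      rw [hA]; exact ⟨dist x₁, LipschitzWith.dist_right x₁, rfl⟩
    have h1 : (⨅ b : B, dInfty S (fun r : X × Y => dist x₁ r.1) b) < H + δ := by
      refine lt_of_le_of_lt ?_ hlt
      exact le_trans (le_iSup (fun a : A => ⨅ b : B, dInfty S (a : (X × Y) → ℝ) (b : (X × Y) → ℝ)) ⟨_, hamem⟩) hs1
    rw [iInf_lt_iff] at h1
    obtain ⟨b, hb⟩ := h1
    have hb2 : (b : (X × Y) → ℝ) ∈ (· ∘ Prod.snd) '' {g : Y → ℝ | LipschitzWith 1 g} := by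
      rw [← hB]; exact b.2
    obtain ⟨g, hg, hgb⟩ := hb2
    have hbound1 : ∀ r ∈ S, |dist x₁ r.1 - g r.2| ≤ t := by
      intro r hr
      have : edist (dist x₁ r.1) ((b : (X × Y) → ℝ) r) ≤ H + δ := by
        refine le_trans ?_ hb.le
        exact le_iSup (fun z : S => edist (dist x₁ (z : X × Y).1) ((b : (X × Y) → ℝ) z)) ⟨r, hr⟩
      rw [← hgb] at this
      rw [edist_dist, Real.dist_eq] at this
      exact (ENNReal.ofReal_le_iff_le_toReal htop).1 this
    -- second transfer: g' = dist y₁ ·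
    have hbmem : (fun r : X × Y => dist y₁ r.2) ∈ B := by
      rw [hB]; exact ⟨dist y₁, LipschitzWith.dist_right y₁, rfl⟩
    have h2 : (⨅ a : A, dInfty S a (fun r : X × Y => dist y₁ r.2)) < H + δ := by
      refine lt_of_le_of_lt ?_ hlt
      exact le_trans (le_iSup (fun b : B => ⨅ a : A, dInfty S (a : (X × Y) → ℝ) (b : (X × Y) → ℝ)) ⟨_, hbmem⟩) hs2
    rw [iInf_lt_iff] at h2
    obtain ⟨a, ha⟩ := h2
    have ha2 : (a : (X × Y) → ℝ) ∈ (· ∘ Prod.fst) '' {f : X → ℝ | LipschitzWith 1 f} := by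
      rw [← hA]; exact a.2
    obtain ⟨f', hf', hfa⟩ := ha2
    have hbound2 : ∀ r ∈ S, |f' r.1 - dist y₁ r.2| ≤ t := by
      intro r hr
      have : edist ((a : (X × Y) → ℝ) r) (dist y₁ r.2) ≤ H + δ := by
        refine le_trans ?_ ha.le
        exact le_iSup (fun z : S => edist ((a : (X × Y) → ℝ) z) (dist y₁ (z : X × Y).2)) ⟨r, hr⟩
      rw [← hfa] at this
      rw [edist_dist, Real.dist_eq] at this
      exact (ENNReal.ofReal_le_iff_le_toReal htop).1 this
    -- real arithmetic
    have e1 := hbound1 (x₁, y₁) hp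
    have e2 := hbound1 (x₂, y₂) hq
    have e3 := hbound2 (x₁, y₁) hp
    have e4 := hbound2 (x₂, y₂) hq
    simp only [dist_self] at e1 e3
    have glip : |g y₂ - g y₁| ≤ dist y₁ y₂ := by
      have := hg.dist_le_mul (x₁, y₂).2 y₁
      rw [NNReal.coe_one, one_mul, Real.dist_eq] at this
      calc |g y₂ - g y₁| ≤ dist y₂ y₁ := this
      _ = dist y₁ y₂ := dist_comm _ _
    have flip : |f' x₂ - f' x₁| ≤ dist x₁ x₂ := by
      have := hf'.dist_le_mul x₂ x₁
      rw [NNReal.coe_one, one_mul, Real.dist_eq] at this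
      calc |f' x₂ - f' x₁| ≤ dist x₂ x₁ := this
      _ = dist x₁ x₂ := dist_comm _ _
    have key : |dist x₁ x₂ - dist y₁ y₂| ≤ 2 * t := by
      rw [abs_le] at e1 e2 e3 e4 glip flip ⊢
      constructor <;> linarith
    have ht0 : 0 ≤ t := ENNReal.toReal_nonneg
    calc edist (dist x₁ x₂) (dist y₁ y₂)
        = ENNReal.ofReal |dist x₁ x₂ - dist y₁ y₂| := by rw [edist_dist, Real.dist_eq]
      _ ≤ ENNReal.ofReal (2 * t) := ENNReal.ofReal_le_ofReal key
      _ = 2 * ENNReal.ofReal t := by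
            rw [ENNReal.ofReal_mul (by norm_num : (0:ℝ) ≤ 2)]
            norm_num
      _ = 2 * (H + δ) := by rw [ht, ENNReal.ofReal_toReal htop]
      _ = 2 * H + ε := by
            rw [mul_add, hδ, ENNReal.mul_div_cancel' (by norm_num) (by norm_num)]
  · -- 2 * H ≤ distortion S
    by_cases hD : distortion S = ⊤
    · rw [hD]; exact le_top
    set Dr := (distortion S).toReal with hDr
    have hdis : ∀ p ∈ S, ∀ q ∈ S,
        |dist (Prod.fst p) (Prod.fst q) - dist (Prod.snd p) (Prod.snd q)| ≤ Dr := by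
      intro p hp q hq
      have : edist (dist p.1 q.1) (dist p.2 q.2) ≤ distortion S := by
        rw [distortion]
        exact le_trans (le_iSup (fun z : S => edist (dist p.1 (z : X × Y).1)
          (dist p.2 (z : X × Y).2)) ⟨q, hq⟩)
          (le_iSup (fun w : S => ⨆ z : S, edist (dist (w : X × Y).1 (z : X × Y).1)
            (dist (w : X × Y).2 (z : X × Y).2)) ⟨p, hp⟩)
      rw [edist_dist, Real.dist_eq] at this
      exact (ENNReal.ofReal_le_iff_le_toReal hD).1 this
    have hHle : H ≤ ENNReal.ofReal (Dr / 2) := by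
      rw [hHdef, hausd]
      apply max_le
      · refine iSup_le fun a => ?_
        have ha2 : (a : (X × Y) → ℝ) ∈ (· ∘ Prod.fst) '' {f : X → ℝ | LipschitzWith 1 f} := by
          rw [← hA]; exact a.2
        obtain ⟨f, hf, hfa⟩ := ha2
        obtain ⟨g, hg, hgS⟩ := exists_transfer S hne Dr hdis f hf
        have hgB : (g ∘ Prod.snd) ∈ B := by rw [hB]; exact ⟨g, hg, rfl⟩
        refine le_trans (iInf_le (fun b : B => dInfty S (a : (X × Y) → ℝ) (b : (X × Y) → ℝ)) ⟨_, hgB⟩) ?_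
        rw [dInfty]
        refine iSup_le fun r => ?_
        rw [← hfa]
        rw [edist_dist, Real.dist_eq]
        exact ENNReal.ofReal_le_ofReal (hgS r r.2)
      · refine iSup_le fun b => ?_
        have hb2 : (b : (X × Y) → ℝ) ∈ (· ∘ Prod.snd) '' {g : Y → ℝ | LipschitzWith 1 g} := by
          rw [← hB]; exact b.2
        obtain ⟨g, hg, hgb⟩ := hb2
        have hne' : {p : Y × X | (p.2, p.1) ∈ S}.Nonempty := by
          obtain ⟨⟨x₀, y₀⟩, h₀⟩ := hne
          exact ⟨(y₀, x₀), h₀⟩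
        have hdis' : ∀ p ∈ {p : Y × X | (p.2, p.1) ∈ S}, ∀ q ∈ {p : Y × X | (p.2, p.1) ∈ S},
            |dist (Prod.fst p) (Prod.fst q) - dist (Prod.snd p) (Prod.snd q)| ≤ Dr := by
          intro p hp q hq
          rw [abs_sub_comm]
          exact hdis (p.2, p.1) hp (q.2, q.1) hq
        obtain ⟨f, hf, hfS⟩ := exists_transfer {p : Y × X | (p.2, p.1) ∈ S} hne' Dr hdis' g hg
        have hfA : (f ∘ Prod.fst) ∈ A := by rw [hA]; exact ⟨f, hf, rfl⟩
        refine le_trans (iInf_le (fun a : A => dInfty S (a : (X × Y) → ℝ) (b : (X × Y) → ℝ)) ⟨_, hfA⟩) ?_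
        rw [dInfty]
        refine iSup_le fun r => ?_
        rw [← hgb]
        rw [edist_dist, Real.dist_eq]
        have := hfS ((r : X × Y).2, (r : X × Y).1) r.2
        rw [abs_sub_comm] at this
        exact ENNReal.ofReal_le_ofReal this
    calc 2 * H ≤ 2 * ENNReal.ofReal (Dr / 2) := by gcongr
      _ = ENNReal.ofReal (2 * (Dr / 2)) := by
            rw [ENNReal.ofReal_mul (by norm_num : (0:ℝ) ≤ 2)]; norm_num
      _ = ENNReal.ofReal Dr := by ring_nf
      _ = distortion S := by rw [hDr, ENNReal.ofReal_toReal hD]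
end
end

section
/- Let X and Y be geometric data sets and let π, ρ ∈ Π(μ_X, μ_Y) be couplings of μ_X and μ_Y. Then |d_conc^π(X,Y) − d_conc^ρ(X,Y)| ≤ 2 d_P(π, ρ), where d_P is the Prohorov distance between π and ρ on X × Y equipped with the l∞-product metric. -/
open MeasureTheory Topology Filter ENNReal

noncomputable section

section AuxLemmas

open EMetric (infEdist)

/-- Hausdorff distance comparison under a pointwise perturbation bound. -/
lemma hausd_le_add_aux {α : Type*} (d₁ d₂ : α → α → ℝ≥0∞) (c : ℝ≥0∞) (A B : Set α)
    (h : ∀ a ∈ A, ∀ b ∈ B, d₂ a b ≤ d₁ a b + c) :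
    hausd d₂ A B ≤ hausd d₁ A B + c := by
  unfold hausd
  rw [max_le_iff]
  constructor
  · refine le_trans ?_ (add_le_add_left (le_max_left _ _) c)
    refine iSup_le fun a => ?_
    calc (⨅ b : B, d₂ a b) ≤ ⨅ b : B, (d₁ a b + c) :=
          iInf_mono fun b => h a a.2 b b.2
      _ = (⨅ b : B, d₁ a b) + c := ENNReal.iInf_add.symm
      _ ≤ (⨆ a : A, ⨅ b : B, d₁ a b) + c :=
          add_le_add_left (le_iSup (fun a : A => ⨅ b : B, d₁ (a : α) b) a) c
  · refine le_trans ?_ (add_le_add_left (le_max_right _ _) c)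
    refine iSup_le fun b => ?_
    calc (⨅ a : A, d₂ a b) ≤ ⨅ a : A, (d₁ a b + c) :=
          iInf_mono fun a => h a a.2 b b.2
      _ = (⨅ a : A, d₁ a b) + c := ENNReal.iInf_add.symm
      _ ≤ (⨆ b : B, ⨅ a : A, d₁ a b) + c :=
          add_le_add_left (le_iSup (fun b : B => ⨅ a : A, d₁ a (b : α)) b) c

/-- Ky Fan distance comparison between two measures at Prohorov distance `δ`. -/
lemma kyFan_le_add_aux {Ω E : Type*} [MeasurableSpace Ω] [PseudoEMetricSpace Ω]
    [PseudoEMetricSpace E]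
    (π ρ : Measure Ω) (u v : Ω → E) (δ : ℝ≥0∞) (hδ : δ ≠ ⊤)
    (hmeas : ∀ t : ℝ≥0∞, MeasurableSet {ω | t < edist (u ω) (v ω)})
    (hlip : ∀ z z' : Ω, edist (u z) (v z) ≤ edist (u z') (v z') + 2 * edist z z')
    (hpro : ∀ A : Set Ω, MeasurableSet A → ρ A ≤ π {z | infEdist z A < δ} + δ) :
    kyFan ρ u v ≤ kyFan π u v + 2 * δ := by
  have h2δ : (2 : ℝ≥0∞) * δ ≠ ⊤ := ENNReal.mul_ne_top (by simp) hδ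
  have key : ∀ ε ∈ {ε : ℝ≥0∞ | π {ω | ε < edist (u ω) (v ω)} ≤ ε},
      kyFan ρ u v ≤ ε + 2 * δ := by
    intro ε hε
    apply sInf_le
    show ρ {ω | ε + 2 * δ < edist (u ω) (v ω)} ≤ ε + 2 * δ
    have hsub : {z | infEdist z {ω | ε + 2 * δ < edist (u ω) (v ω)} < δ}
        ⊆ {ω | ε < edist (u ω) (v ω)} := by
      intro z hz
      obtain ⟨a, ha, hza⟩ := EMetric.infEdist_lt_iff.mp hz
      have h1 : ε + 2 * δ < edist (u a) (v a) := ha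
      have h2 : edist (u a) (v a) ≤ edist (u z) (v z) + 2 * edist a z := hlip a z
      have h3 : edist a z ≤ δ := by rw [edist_comm]; exact hza.le
      have h4 : ε + 2 * δ < edist (u z) (v z) + 2 * δ := by
        refine lt_of_lt_of_le h1 (h2.trans ?_)
        gcongr
      exact (ENNReal.add_lt_add_iff_right h2δ).mp h4
    calc ρ {ω | ε + 2 * δ < edist (u ω) (v ω)}
        ≤ π {z | infEdist z {ω | ε + 2 * δ < edist (u ω) (v ω)} < δ} + δ :=
          hpro _ (hmeas _)
      _ ≤ ε + δ := add_le_add_left ((measure_mono hsub).trans hε) δ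
      _ ≤ ε + 2 * δ := by
          gcongr
          exact le_mul_of_one_le_left zero_le one_le_two
  show kyFan ρ u v ≤ sInf {ε : ℝ≥0∞ | π {ω | ε < edist (u ω) (v ω)} ≤ ε} + 2 * δ
  rw [ENNReal.sInf_add]
  exact le_iInf₂ fun ε hε => key ε hε

/-- Symmetry of the Prohorov inequality for probability measures. -/
lemma prohorov_mem_symm_aux {Z : Type*} [PseudoEMetricSpace Z] [MeasurableSpace Z]
    [OpensMeasurableSpace Z] (π ρ : Measure Z)
    [IsProbabilityMeasure π] [IsProbabilityMeasure ρ] (δ : ℝ≥0∞)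
    (h : ∀ A : Set Z, MeasurableSet A → ρ A ≤ π {z | infEdist z A < δ} + δ) :
    ∀ B : Set Z, MeasurableSet B → π B ≤ ρ {z | infEdist z B < δ} + δ := by
  intro B hB
  set N := {z | infEdist z B < δ} with hNdef
  have hNopen : IsOpen N := isOpen_lt EMetric.continuous_infEdist continuous_const
  have hNmeas : MeasurableSet N := hNopen.measurableSet
  have hC := h Nᶜ hNmeas.compl
  have hsub : {z | infEdist z Nᶜ < δ} ⊆ Bᶜ := by
    intro z hz hzB
    obtain ⟨c, hc, hzc⟩ := EMetric.infEdist_lt_iff.mp hz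
    refine hc ?_
    show infEdist c B < δ
    exact lt_of_le_of_lt (EMetric.infEdist_le_edist_of_mem hzB)
      (by rwa [edist_comm])
  have hC' : ρ Nᶜ ≤ π Bᶜ + δ :=
    hC.trans (add_le_add_left (measure_mono hsub) δ)
  have hρN : ρ Nᶜ = 1 - ρ N := by
    rw [measure_compl hNmeas (measure_ne_top ρ N), measure_univ]
  have hπB : π Bᶜ = 1 - π B := by
    rw [measure_compl hB (measure_ne_top π B), measure_univ]
  rw [hρN, hπB] at hC'
  have hπB1 : π B ≤ 1 := prob_le_one
  have hfin : (1 : ℝ≥0∞) - π B ≠ ⊤ :=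
    (tsub_le_self.trans_lt ENNReal.one_lt_top).ne
  have h1 : (1 : ℝ≥0∞) ≤ (1 - π B) + δ + ρ N := tsub_le_iff_right.mp hC'
  have h2 : (1 - π B) + π B ≤ (1 - π B) + (δ + ρ N) := by
    rw [tsub_add_cancel_of_le hπB1]
    calc (1 : ℝ≥0∞) ≤ (1 - π B) + δ + ρ N := h1
      _ = (1 - π B) + (δ + ρ N) := by rw [add_assoc]
  have h3 : π B ≤ δ + ρ N := (ENNReal.add_le_add_iff_left hfin).mp h2
  rwa [add_comm] at h3

/-- One direction of the main estimate, at Prohorov level `δ`. -/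
lemma dConc_dir_aux (X Y : GDS) (π ρ : Measure (X.carrier × Y.carrier))
    (δ : ℝ≥0∞) (hδ : δ ≠ ⊤)
    (h : ∀ A : Set (X.carrier × Y.carrier), MeasurableSet A →
      ρ A ≤ π {z | infEdist z A < δ} + δ) :
    dConcCoupling X Y ρ ≤ dConcCoupling X Y π + 2 * δ := by
  haveI : SecondCountableTopology X.carrier :=
    UniformSpace.secondCountable_of_separable _
  haveI : SecondCountableTopology Y.carrier :=
    UniformSpace.secondCountable_of_separable _
  apply hausd_le_add_aux
  rintro a ⟨f, hf, rfl⟩ b ⟨g, hg, rfl⟩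
  have hf1 : ∀ x y, |f x - f y| ≤ dist x y := fun x y =>
    (X.dist_isLUB x y).1 ⟨f, hf, rfl⟩
  have hg1 : ∀ x y, |g x - g y| ≤ dist x y := fun x y =>
    (Y.dist_isLUB x y).1 ⟨g, hg, rfl⟩
  have hfe : ∀ x y, edist (f x) (f y) ≤ edist x y := fun x y => by
    rw [edist_dist, edist_dist]
    exact ENNReal.ofReal_le_ofReal (by rw [Real.dist_eq]; exact hf1 x y)
  have hge : ∀ x y, edist (g x) (g y) ≤ edist x y := fun x y => by
    rw [edist_dist, edist_dist]
    exact ENNReal.ofReal_le_ofReal (by rw [Real.dist_eq]; exact hg1 x y)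
  have hfc : Continuous f :=
    (LipschitzWith.of_dist_le_mul (K := 1) fun x y => by
      rw [Real.dist_eq, NNReal.coe_one, one_mul]; exact hf1 x y).continuous
  have hgc : Continuous g :=
    (LipschitzWith.of_dist_le_mul (K := 1) fun x y => by
      rw [Real.dist_eq, NNReal.coe_one, one_mul]; exact hg1 x y).continuous
  refine kyFan_le_add_aux π ρ _ _ δ hδ ?_ ?_ h
  · intro t
    have hcont : Continuous fun ω : X.carrier × Y.carrier =>
        edist ((f ∘ Prod.fst) ω) ((g ∘ Prod.snd) ω) :=
      (hfc.comp continuous_fst).edist (hgc.comp continuous_snd)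
    exact (isOpen_lt continuous_const hcont).measurableSet
  · intro z z'
    calc edist ((f ∘ Prod.fst) z) ((g ∘ Prod.snd) z)
        ≤ edist (f z.1) (f z'.1) + edist (f z'.1) (g z'.2) + edist (g z'.2) (g z.2) :=
          edist_triangle4 _ _ _ _
      _ ≤ edist z z' + edist (f z'.1) (g z'.2) + edist z z' := by
          gcongr
          · exact (hfe _ _).trans (by rw [Prod.edist_eq]; exact le_max_left _ _)
          · refine (hge _ _).trans ?_
            rw [edist_comm, Prod.edist_eq]
            exact le_max_right _ _
      _ = edist ((f ∘ Prod.fst) z') ((g ∘ Prod.snd) z') + 2 * edist z z' := by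
          simp only [Function.comp_apply]; ring

lemma le_add_two_mul_sInf_aux (a b : ℝ≥0∞) (P : Set ℝ≥0∞) (htop : (⊤ : ℝ≥0∞) ∈ P)
    (h : ∀ δ ∈ P, δ ≠ ⊤ → a ≤ b + 2 * δ) : a ≤ b + 2 * sInf P := by
  have h' : ∀ δ ∈ P, a ≤ b + 2 * δ := by
    intro δ hδ
    by_cases hδt : δ = ⊤
    · subst hδt; simp
    · exact h δ hδ hδt
  haveI : Nonempty P := ⟨⟨⊤, htop⟩⟩
  rw [sInf_eq_iInf', ENNReal.mul_iInf_of_ne (by norm_num) (by norm_num),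
    ENNReal.add_iInf]
  exact le_iInf fun δ => h' δ δ.2

end AuxLemmas

/-- `|d_conc^π(X,Y) − d_conc^ρ(X,Y)| ≤ 2 d_P(π, ρ)` for couplings `π, ρ`. -/
theorem dConcCoupling_diff_le_prohorov (X Y : GDS)
    (π ρ : Measure (X.carrier × Y.carrier))
    (hπ : X.Coupling Y π) (hρ : X.Coupling Y ρ) :
    dConcCoupling X Y π ≤ dConcCoupling X Y ρ + 2 * prohorov π ρ ∧
    dConcCoupling X Y ρ ≤ dConcCoupling X Y π + 2 * prohorov π ρ := by
  haveI hPprob : IsProbabilityMeasure π := hπ.1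
  haveI hQprob : IsProbabilityMeasure ρ := hρ.1
  have htop : (⊤ : ℝ≥0∞) ∈ {ε : ℝ≥0∞ | ∀ A : Set (X.carrier × Y.carrier),
      MeasurableSet A → ρ A ≤ π {z | EMetric.infEdist z A < ε} + ε} := by
    intro A hA; simp
  constructor
  · refine le_add_two_mul_sInf_aux _ _ _ htop ?_
    intro δ hδ hδt
    exact dConc_dir_aux X Y ρ π δ hδt (prohorov_mem_symm_aux π ρ δ hδ)
  · refine le_add_two_mul_sInf_aux _ _ _ htop ?_
    intro δ hδ hδt
    exact dConc_dir_aux X Y π ρ δ hδt hδ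
end
end

section
/- Let X and Y be geometric data sets. For any real numbers δ > d_conc(X,Y) and κ ∈ [0, 1 − δ], we have ObsDiam(X; −(κ+δ)) ≤ ObsDiam(Y; −κ) + 2δ. -/
open MeasureTheory Topology Filter ENNReal

noncomputable section

/-- For `δ > d_conc(X,Y)` and `κ ∈ [0, 1 − δ]`,
`ObsDiam(X; −(κ+δ)) ≤ ObsDiam(Y; −κ) + 2δ`. -/
theorem obsDiam_le_of_dConc (X Y : GDS) (δ κ : ℝ)
    (hδ : dConc X Y < ENNReal.ofReal δ) (hκ0 : 0 ≤ κ) (hκ1 : κ ≤ 1 - δ) :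
    obsDiam X (κ + δ) ≤ obsDiam Y κ + ENNReal.ofReal (2 * δ) := by
  have hδ0 : 0 ≤ δ := by
    by_contra h
    push_neg at h
    rw [ENNReal.ofReal_eq_zero.mpr h.le] at hδ
    exact (not_lt_of_ge zero_le) hδ
  -- extract parameters realizing the observable distance up to δ
  simp only [dConc, iInf_lt_iff] at hδ
  obtain ⟨φ, hφ, ψ, hψ, hH⟩ := hδ
  rw [obsDiam]
  refine iSup_le ?_
  rintro ⟨f, hf⟩
  -- f is 1-Lipschitz, hence measurable
  have lipF : ∀ (Z : GDS) (f : Z.carrier → ℝ), f ∈ Z.F → LipschitzWith 1 f := by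
    intro Z f hf
    refine LipschitzWith.of_dist_le_mul fun x y => ?_
    rw [NNReal.coe_one, one_mul, Real.dist_eq]
    exact (Z.dist_isLUB x y).1 ⟨f, hf, rfl⟩
  have hfm : Measurable f := (lipF X f hf).continuous.measurable
  -- find a matching g ∈ Y.F with small Ky Fan distance
  have h1 : (⨆ a : ((· ∘ φ) '' X.F), ⨅ b : ((· ∘ ψ) '' Y.F),
      kyFan (volume : Measure (Set.Icc (0:ℝ) 1)) a.1 b.1) < ENNReal.ofReal δ :=
    (max_lt_iff.mp hH).1
  have h2 : (⨅ b : ((· ∘ ψ) '' Y.F),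
      kyFan (volume : Measure (Set.Icc (0:ℝ) 1)) (f ∘ φ) b.1) < ENNReal.ofReal δ :=
    lt_of_le_of_lt (le_iSup (fun a : ((· ∘ φ) '' X.F) => ⨅ b : ((· ∘ ψ) '' Y.F),
      kyFan (volume : Measure (Set.Icc (0:ℝ) 1)) a.1 b.1) ⟨f ∘ φ, ⟨f, hf, rfl⟩⟩) h1
  rw [iInf_lt_iff] at h2
  obtain ⟨⟨v, g, hg, rfl⟩, hkf⟩ := h2
  have hgm : Measurable g := (lipF Y g hg).continuous.measurable
  -- pick ε < δ witnessing the Ky Fan bound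
  rw [kyFan, sInf_lt_iff] at hkf
  obtain ⟨ε, hεmem, hεδ⟩ := hkf
  simp only [Set.mem_setOf_eq] at hεmem
  have hεtop : ε ≠ ⊤ := ne_top_of_lt (hεδ.trans_le le_top)
  -- the key estimate for the pair (f, g)
  have key : partialDiam (X.μ.map f) (ENNReal.ofReal (1 - (κ + δ))) ≤
      partialDiam (Y.μ.map g) (ENNReal.ofReal (1 - κ)) + ENNReal.ofReal (2 * δ) := by
    conv_rhs => rw [partialDiam]
    rw [ENNReal.iInf_add]
    refine le_iInf fun I => ?_
    rw [ENNReal.iInf_add]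
    refine le_iInf fun hI => ?_
    rw [ENNReal.iInf_add]
    refine le_iInf fun hν => ?_
    set J := Metric.cthickening (ε.toNNReal : ℝ) I with hJ
    have hJm : MeasurableSet J := Metric.isClosed_cthickening.measurableSet
    set A := (g ∘ ψ) ⁻¹' I with hA
    set E := {t : Set.Icc (0:ℝ) 1 | ε < edist ((f ∘ φ) t) ((g ∘ ψ) t)} with hE
    have hAvol : volume A = (Y.μ.map g) I := by
      rw [Measure.map_apply hgm hI, ← hψ.2, Measure.map_apply hψ.1 (hgm hI), hA,
        Set.preimage_comp]
    have hJvol : (X.μ.map f) J = volume ((f ∘ φ) ⁻¹' J) := by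
      rw [Measure.map_apply hfm hJm, ← hφ.2, Measure.map_apply hφ.1 (hfm hJm),
        Set.preimage_comp]
    have hsub : A \ E ⊆ (f ∘ φ) ⁻¹' J := by
      rintro t ⟨htA, htE⟩
      simp only [hE, Set.mem_setOf_eq, not_lt] at htE
      have htA' : (g ∘ ψ) t ∈ I := htA
      have : EMetric.infEdist ((f ∘ φ) t) I ≤ ε :=
        (EMetric.infEdist_le_edist_of_mem htA').trans htE
      refine Metric.mem_cthickening_iff.mpr ?_
      rwa [ENNReal.ofReal_coe_nnreal, ENNReal.coe_toNNReal hεtop]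
    have h5 : volume A ≤ volume (A \ E) + volume E := by
      refine (measure_mono ?_).trans (measure_union_le _ _)
      intro t ht
      by_cases h : t ∈ E
      · exact Or.inr h
      · exact Or.inl ⟨ht, h⟩
    have hmem : ENNReal.ofReal (1 - (κ + δ)) ≤ (X.μ.map f) J := by
      have e1 : ENNReal.ofReal (1 - (κ + δ)) = ENNReal.ofReal (1 - κ) - ENNReal.ofReal δ := by
        rw [← ENNReal.ofReal_sub _ hδ0]
        congr 1; ring
      calc ENNReal.ofReal (1 - (κ + δ))
          = ENNReal.ofReal (1 - κ) - ENNReal.ofReal δ := e1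
        _ ≤ volume A - ε := tsub_le_tsub (hν.trans_eq hAvol.symm) hεδ.le
        _ ≤ volume (A \ E) := by
            rw [tsub_le_iff_right]
            exact h5.trans (add_le_add_right hεmem _)
        _ ≤ volume ((f ∘ φ) ⁻¹' J) := measure_mono hsub
        _ = (X.μ.map f) J := hJvol.symm
    have hpd : partialDiam (X.μ.map f) (ENNReal.ofReal (1 - (κ + δ))) ≤ EMetric.diam J :=
      iInf_le_of_le J (iInf_le_of_le hJm (iInf_le _ hmem))
    refine hpd.trans ?_
    calc EMetric.diam J ≤ EMetric.diam I + 2 * (ε.toNNReal : ℝ≥0∞) :=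
          Metric.ediam_cthickening_le _
      _ ≤ EMetric.diam I + ENNReal.ofReal (2 * δ) := by
          gcongr
          rw [ENNReal.coe_toNNReal hεtop]
          have : ENNReal.ofReal (2 * δ) = 2 * ENNReal.ofReal δ := by
            rw [ENNReal.ofReal_mul zero_le_two]
            norm_num
          rw [this]
          exact mul_le_mul_right hεδ.le 2
  refine key.trans (add_le_add_left ?_ _)
  exact le_iSup (fun g : Y.F => partialDiam (Y.μ.map g) (ENNReal.ofReal (1 - κ))) ⟨g, hg⟩
end
end

section
/- Let X be a geometric data set. Then the function κ ↦ ObsDiam(X; −κ) is right-continuous on (0,1). -/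
open MeasureTheory Topology Filter ENNReal

noncomputable section

/-- `partialDiam` is monotone in the mass parameter. -/
lemma partialDiam_mono (ν : Measure ℝ) {a a' : ℝ≥0∞} (h : a ≤ a') :
    partialDiam ν a ≤ partialDiam ν a' := by
  refine le_iInf₂ fun I hI => le_iInf fun ha' => ?_
  exact iInf₂_le_of_le I hI (iInf_le _ (h.trans ha'))

/-- `obsDiam X` is antitone. -/
lemma obsDiam_antitone (X : GDS) : Antitone (obsDiam X) := by
  intro s t hst
  exact iSup_mono fun f => partialDiam_mono _ (ENNReal.ofReal_le_ofReal (by linarith))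

/-- Left-continuity of the partial diameter of a probability measure on `ℝ` in its
mass parameter, at a positive mass level. -/
lemma partialDiam_left_cont (ν : Measure ℝ) [IsProbabilityMeasure ν] {r : ℝ} (hr : 0 < r)
    {b : ℝ≥0∞} (hb : b ≠ ⊤)
    (h : ∀ a : ℝ≥0∞, 0 < a → a < ENNReal.ofReal r → partialDiam ν a ≤ b) :
    partialDiam ν (ENNReal.ofReal r) ≤ b := by
  refine ENNReal.le_of_forall_pos_le_add fun ε hε _ => ?_
  set η : ℝ := (ε : ℝ) / 4 with hηdef
  have hηpos : 0 < η := by positivity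
  set B : ℝ := b.toReal with hBdef
  have hB0 : 0 ≤ B := ENNReal.toReal_nonneg
  have hbB : b = ENNReal.ofReal B := (ENNReal.ofReal_toReal hb).symm
  -- the approximating mass levels
  set a : ℕ → ℝ≥0∞ := fun n => ENNReal.ofReal (r - r / (n + 2)) with ha
  have hden : ∀ n : ℕ, (0:ℝ) < (n : ℝ) + 2 := fun n => by positivity
  have hrsub : ∀ n : ℕ, 0 < r - r / ((n : ℝ) + 2) := by
    intro n
    have h1 : r / ((n : ℝ) + 2) < r :=
      div_lt_self hr (by have := Nat.cast_nonneg (α := ℝ) n; linarith)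
    linarith
  have ha_pos : ∀ n, 0 < a n := fun n => ENNReal.ofReal_pos.2 (hrsub n)
  have ha_lt : ∀ n, a n < ENNReal.ofReal r := by
    intro n
    have h1 : 0 < r / ((n : ℝ) + 2) := div_pos hr (hden n)
    exact (ENNReal.ofReal_lt_ofReal_iff hr).2 (by linarith)
  have ha_tendsto : Tendsto a atTop (𝓝 (ENNReal.ofReal r)) := by
    have h1 : Tendsto (fun n : ℕ => r / ((n : ℝ) + 2)) atTop (𝓝 0) :=
      Tendsto.div_atTop tendsto_const_nhds
        (tendsto_atTop_add_const_right _ 2 tendsto_natCast_atTop_atTop)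
    have h2 : Tendsto (fun n : ℕ => r - r / ((n : ℝ) + 2)) atTop (𝓝 r) := by
      simpa using tendsto_const_nhds.sub h1
    exact (ENNReal.continuous_ofReal.tendsto r).comp h2
  have ha_mono : ∀ n, a 0 ≤ a n := by
    intro n
    refine ENNReal.ofReal_le_ofReal ?_
    have h1 : r / ((n : ℝ) + 2) ≤ r / ((0 : ℕ) + 2) := by
      apply div_le_div_of_nonneg_left hr.le (by norm_num)
      push_cast
      have := Nat.cast_nonneg (α := ℝ) n
      linarith
    push_cast at h1 ⊢
    linarith
  -- choose near-optimal sets for each level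
  have hIn : ∀ n, ∃ I : Set ℝ, MeasurableSet I ∧ a n ≤ ν I ∧
      EMetric.diam I < b + ENNReal.ofReal η := by
    intro n
    have hlt : partialDiam ν (a n) < b + ENNReal.ofReal η :=
      lt_of_le_of_lt (h _ (ha_pos n) (ha_lt n))
        (ENNReal.lt_add_right hb (by simpa using (ENNReal.ofReal_pos.2 hηpos).ne'))
    simpa only [partialDiam, iInf_lt_iff, exists_prop] using hlt
  choose I hImeas haI hdI using hIn
  have hne : ∀ n, (I n).Nonempty := by
    intro n
    rw [Set.nonempty_iff_ne_empty]
    rintro hemp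
    have := haI n
    rw [hemp] at this
    simp at this
    exact (ha_pos n).ne' this
  have hbdd : ∀ n, Bornology.IsBounded (I n) := by
    intro n
    rw [Metric.isBounded_iff_ediam_ne_top]
    exact ((hdI n).trans_le le_top).ne
  set c : ℕ → ℝ := fun n => sInf (I n) with hc
  set d : ℕ → ℝ := fun n => sSup (I n) with hd
  have hsubIcc : ∀ n, I n ⊆ Set.Icc (c n) (d n) := fun n x hx =>
    ⟨csInf_le (hbdd n).bddBelow hx, le_csSup (hbdd n).bddAbove hx⟩
  have hcd : ∀ n, d n - c n ≤ B + η := by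
    intro n
    have h1 : c n ∈ closure (I n) := csInf_mem_closure (hne n) (hbdd n).bddBelow
    have h2 : d n ∈ closure (I n) := csSup_mem_closure (hne n) (hbdd n).bddAbove
    have h3 : edist (c n) (d n) ≤ EMetric.diam (closure (I n)) :=
      EMetric.edist_le_diam_of_mem h1 h2
    replace h3 : edist (c n) (d n) ≤ EMetric.diam (I n) := h3.trans_eq (EMetric.diam_closure (s := I n))
    have h4 : edist (c n) (d n) < ENNReal.ofReal (B + η) := by
      calc edist (c n) (d n) ≤ EMetric.diam (I n) := h3
        _ < b + ENNReal.ofReal η := hdI n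
        _ = ENNReal.ofReal (B + η) := by
            rw [hbB, ENNReal.ofReal_add hB0 hηpos.le]
    rw [edist_dist] at h4
    have h5 : dist (c n) (d n) < B + η := by
      by_contra hcon
      exact absurd (ENNReal.ofReal_le_ofReal (not_lt.1 hcon)) (not_le.2 h4)
    rw [Real.dist_eq] at h5
    have := abs_sub_comm (c n) (d n) ▸ h5
    have h6 : d n - c n ≤ |d n - c n| := le_abs_self _
    rw [abs_sub_comm (c n) (d n)] at h5
    linarith
  -- tightness: a compact set carrying mass close to 1
  have htight : ∃ M : ℕ, ν (Set.Icc (-(M:ℝ)) M)ᶜ < a 0 := by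
    have hmono : Monotone (fun M : ℕ => Set.Icc (-(M:ℝ)) M) := by
      intro m n hmn
      exact Set.Icc_subset_Icc (neg_le_neg (Nat.cast_le.2 hmn)) (Nat.cast_le.2 hmn)
    have hU : ⋃ M : ℕ, Set.Icc (-(M:ℝ)) M = Set.univ := by
      ext x
      simp only [Set.mem_iUnion, Set.mem_Icc, Set.mem_univ, iff_true]
      obtain ⟨M, hM⟩ := exists_nat_ge |x|
      exact ⟨M, by cases abs_le.1 hM; constructor <;> linarith [abs_le.1 hM]⟩
    have hT : Tendsto (fun M : ℕ => ν (Set.Icc (-(M:ℝ)) M)) atTop (𝓝 1) := by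
      have := tendsto_measure_iUnion_atTop (μ := ν) hmono
      rw [hU] at this
      rw [measure_univ] at this; exact this
    have hlt1 : (1 : ℝ≥0∞) - a 0 < 1 :=
      ENNReal.sub_lt_self one_ne_top one_ne_zero (ha_pos 0).ne'
    have := hT.eventually (eventually_gt_nhds hlt1)
    obtain ⟨M, hM⟩ := this.exists
    refine ⟨M, ?_⟩
    rw [prob_compl_eq_one_sub measurableSet_Icc]
    have hle : ν (Set.Icc (-(M:ℝ)) M) ≤ 1 := prob_le_one
    rw [ENNReal.sub_lt_iff_lt_right (hle.trans_lt one_lt_top).ne hle]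
    calc (1 : ℝ≥0∞) = 1 - a 0 + a 0 := by
          rw [tsub_add_cancel_of_le]
          calc a 0 ≤ ν (I 0) := haI 0
            _ ≤ 1 := prob_le_one
      _ < ν (Set.Icc (-(M:ℝ)) M) + a 0 := by
          exact ENNReal.add_lt_add_right ((ha_lt 0).trans_le le_top).ne hM
      _ = a 0 + ν (Set.Icc (-(M:ℝ)) M) := add_comm _ _
  obtain ⟨M, hM⟩ := htight
  -- each interval meets the compact set, so left endpoints are bounded
  have hmeet : ∀ n, ∃ x, x ∈ Set.Icc (c n) (d n) ∧ x ∈ Set.Icc (-(M:ℝ)) M := by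
    intro n
    by_contra hcon
    push_neg at hcon
    have hsub2 : Set.Icc (c n) (d n) ⊆ (Set.Icc (-(M:ℝ)) M)ᶜ := fun x hx => hcon x hx
    have : ν (Set.Icc (c n) (d n)) < a 0 :=
      lt_of_le_of_lt (measure_mono hsub2) hM
    have h2 : a n ≤ ν (Set.Icc (c n) (d n)) :=
      (haI n).trans (measure_mono (hsubIcc n))
    exact absurd ((ha_mono n).trans h2) (not_le.2 this)
  have hcbnd : ∀ n, c n ∈ Set.Icc (-(M:ℝ) - (B + η)) M := by
    intro n
    obtain ⟨x, ⟨hx1, hx2⟩, hx3, hx4⟩ := hmeet n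
    have := hcd n
    constructor <;> linarith
  -- Bolzano–Weierstrass
  obtain ⟨l, -, φ, hφ, hconv⟩ := (isCompact_Icc (a := -(M:ℝ) - (B + η)) (b := M)).tendsto_subseq hcbnd
  set J : Set ℝ := Set.Icc (l - η) (l + B + 2 * η) with hJ
  have hevsub : ∀ᶠ k in atTop, Set.Icc (c (φ k)) (d (φ k)) ⊆ J := by
    have : ∀ᶠ k in atTop, dist (c (φ k)) l < η :=
      (hconv.eventually (Metric.ball_mem_nhds l hηpos) : _)
    filter_upwards [this] with k hk
    rw [Real.dist_eq, abs_sub_lt_iff] at hk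
    intro x hx
    have h1 := hcd (φ k)
    exact ⟨by cases hx; linarith [hk.2], by cases hx; linarith [hk.1]⟩
  have hνJ : ENNReal.ofReal r ≤ ν J := by
    refine le_of_tendsto (ha_tendsto.comp hφ.tendsto_atTop) ?_
    filter_upwards [hevsub] with k hk
    calc a (φ k) ≤ ν (I (φ k)) := haI (φ k)
      _ ≤ ν (Set.Icc (c (φ k)) (d (φ k))) := measure_mono (hsubIcc (φ k))
      _ ≤ ν J := measure_mono hk
  calc partialDiam ν (ENNReal.ofReal r)
      ≤ EMetric.diam J := iInf₂_le_of_le J measurableSet_Icc (iInf_le _ hνJ)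
    _ = ENNReal.ofReal (l + B + 2 * η - (l - η)) := Real.ediam_Icc _ _
    _ ≤ b + ↑ε := by
        rw [hbB, ← ENNReal.ofReal_coe_nnreal, ← ENNReal.ofReal_add hB0 ε.coe_nonneg]
        apply ENNReal.ofReal_le_ofReal
        have : (0:ℝ) < ε := hε
        rw [hηdef]
        ring_nf
        nlinarith


/-- `κ ↦ ObsDiam(X; −κ)` is right-continuous on `(0,1)`. -/
theorem obsDiam_rightContinuous (X : GDS) :
    ∀ κ ∈ Set.Ioo (0:ℝ) 1,
      ContinuousWithinAt (fun t => obsDiam X t) (Set.Ici κ) κ := by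
  intro κ hκ
  have hanti : Antitone (obsDiam X) := obsDiam_antitone X
  rw [ContinuousWithinAt]
  rw [tendsto_order]
  constructor
  · -- lower bound: the hard direction
    intro b hb
    obtain ⟨f, hf⟩ := lt_iSup_iff.mp hb
    have hLip : ∀ x y : X.carrier, |f.1 x - f.1 y| ≤ dist x y := fun x y =>
      (X.dist_isLUB x y).1 ⟨f.1, f.2, rfl⟩
    have hfm : Measurable f.1 := by
      have : LipschitzWith 1 f.1 :=
        LipschitzWith.of_dist_le_mul fun x y => by
          rw [Real.dist_eq]; simpa using hLip x y
      exact this.continuous.measurable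
    set ν : Measure ℝ := X.μ.map f.1 with hν
    have : IsProbabilityMeasure ν := Measure.isProbabilityMeasure_map hfm.aemeasurable
    have hbne : b ≠ ⊤ := hf.ne_top
    have hr : 0 < 1 - κ := by linarith [hκ.2]
    have key : ∃ a : ℝ≥0∞, 0 < a ∧ a < ENNReal.ofReal (1 - κ) ∧ b < partialDiam ν a := by
      by_contra hcon
      push_neg at hcon
      exact absurd (partialDiam_left_cont ν hr hbne hcon) (not_le.2 hf)
    obtain ⟨a, ha0, ha1, hab⟩ := key
    have hane : a ≠ ⊤ := ha1.ne_top
    set s : ℝ := a.toReal with hs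
    have has : a = ENNReal.ofReal s := (ENNReal.ofReal_toReal hane).symm
    have hslt : s < 1 - κ := by
      have := (ENNReal.toReal_lt_toReal hane ENNReal.ofReal_ne_top).2 ha1
      rwa [ENNReal.toReal_ofReal hr.le] at this
    have hev : ∀ᶠ t in 𝓝[Set.Ici κ] κ, t < κ + (1 - κ - s) := by
      apply eventually_nhdsWithin_of_eventually_nhds
      exact Filter.Tendsto.eventually_lt_const (by linarith) tendsto_id
    filter_upwards [hev] with t ht
    have h1 : a ≤ ENNReal.ofReal (1 - t) := by
      rw [has]; exact ENNReal.ofReal_le_ofReal (by linarith)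
    calc b < partialDiam ν a := hab
      _ ≤ partialDiam ν (ENNReal.ofReal (1 - t)) := partialDiam_mono _ h1
      _ ≤ obsDiam X t := le_iSup (fun g : X.F => partialDiam (X.μ.map g.1) (ENNReal.ofReal (1 - t))) f
  · -- upper bound: use antitonicity
    intro c hc
    filter_upwards [eventually_mem_nhdsWithin] with t ht
    exact lt_of_le_of_lt (hanti ht) hc
end
end

section
/- Let X and Y be geometric data sets, (Z, F_Z) a feature space, ν a Borel probability measure on Z, and φ : Z → X, ψ : Z → Y maps such that F_X ∘ φ ⊆ F_Z, F_Y ∘ ψ ⊆ F_Z, φ_*ν = μ_X, and ψ_*ν = μ_Y. Then d_conc(X,Y) ≤ H_{d_KF^ν}(F_X ∘ φ, F_Y ∘ ψ). -/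
open MeasureTheory Topology Filter ENNReal

noncomputable section

section DConcAuxSec
open Set ProbabilityTheory
namespace DConcAux

variable (μ : Measure ℝ) [IsProbabilityMeasure μ]

/-- quantile function -/
def quant (t : ℝ) : ℝ := sInf {x : ℝ | t ≤ cdf μ x}

lemma bddBelow_S {t : ℝ} (ht : 0 < t) : BddBelow {x : ℝ | t ≤ cdf μ x} := by
  have h := (tendsto_cdf_atBot μ).eventually_lt_const ht
  rcases eventually_atBot.1 h with ⟨y, hy⟩
  exact ⟨y, fun z hz => le_of_not_gt fun hlt => absurd hz (not_le.2 (hy z hlt.le))⟩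

lemma nonempty_S {t : ℝ} (ht : t < 1) : {x : ℝ | t ≤ cdf μ x}.Nonempty := by
  have h := (tendsto_cdf_atTop μ).eventually_const_lt ht
  rcases eventually_atTop.1 h with ⟨y, hy⟩
  exact ⟨y, (hy y le_rfl).le⟩

lemma quant_mem {t : ℝ} (ht : 0 < t) (hne : {x : ℝ | t ≤ cdf μ x}.Nonempty) :
    t ≤ cdf μ (quant μ t) := by
  set S := {x : ℝ | t ≤ cdf μ x} with hS
  have hb := bddBelow_S μ ht
  have hforall : ∀ y, quant μ t < y → t ≤ cdf μ y := by
    intro y hy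
    obtain ⟨s, hsS, hsy⟩ := (csInf_lt_iff hb hne).1 hy
    exact le_trans hsS (monotone_cdf μ hsy.le)
  have hc : Tendsto (cdf μ) (𝓝[>] quant μ t) (𝓝 (cdf μ (quant μ t))) :=
    ((cdf μ).right_continuous _).tendsto.mono_left (nhdsWithin_mono _ Ioi_subset_Ici_self)
  exact ge_of_tendsto hc (eventually_nhdsWithin_of_forall fun y hy => hforall y hy)

lemma quant_le_iff {t x : ℝ} (ht : 0 < t) (hne : {x : ℝ | t ≤ cdf μ x}.Nonempty) :
    quant μ t ≤ x ↔ t ≤ cdf μ x := by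
  constructor
  · intro h
    exact le_trans (quant_mem μ ht hne) (monotone_cdf μ h)
  · intro h
    exact csInf_le (bddBelow_S μ ht) h

lemma quant_of_nonpos {t : ℝ} (ht : t ≤ 0) : quant μ t = 0 := by
  have : {x : ℝ | t ≤ cdf μ x} = univ := eq_univ_of_forall fun x => ht.trans (cdf_nonneg μ x)
  rw [quant, this, csInf_of_not_bddBelow (by simpa using not_bddBelow_univ), Real.sInf_empty]

lemma quant_of_empty {t : ℝ} (h : ¬ {x : ℝ | t ≤ cdf μ x}.Nonempty) : quant μ t = 0 := by
  rw [quant, not_nonempty_iff_eq_empty.1 h, Real.sInf_empty]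

/-- set where S_t is empty -/
lemma measurable_quant : Measurable (quant μ) := by
  set E := {t : ℝ | ¬ {x : ℝ | t ≤ cdf μ x}.Nonempty} with hE
  have hEmeas : MeasurableSet E := by
    have : OrdConnected E := by
      constructor
      intro a ha b hb c hc
      simp only [hE, mem_setOf_eq, not_nonempty_iff_eq_empty] at ha ⊢
      rw [← subset_empty_iff, ← ha]
      exact fun x hx => le_trans hc.1 hx
    exact this.measurableSet
  apply measurable_of_Iic
  intro x
  by_cases hx : (0:ℝ) ≤ x
  · have : quant μ ⁻¹' Iic x = (Iic 0 ∪ E) ∪ (Ioi 0 ∩ Eᶜ ∩ {t | t ≤ cdf μ x}) := by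
      ext t
      simp only [mem_preimage, mem_Iic, mem_union, mem_inter_iff, mem_Ioi, mem_compl_iff,
        mem_setOf_eq, hE, not_not]
      constructor
      · intro h
        by_cases h0 : t ≤ 0
        · exact Or.inl (Or.inl h0)
        by_cases hne : {y : ℝ | t ≤ cdf μ y}.Nonempty
        · exact Or.inr ⟨⟨not_le.1 h0, hne⟩, (quant_le_iff μ (not_le.1 h0) hne).1 h⟩
        · exact Or.inl (Or.inr hne)
      · rintro ((h0 | hemp) | ⟨⟨h0, hne⟩, hle⟩)
        · rw [quant_of_nonpos μ h0]; exact hx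
        · rw [quant_of_empty μ hemp]; exact hx
        · exact (quant_le_iff μ h0 hne).2 hle
    rw [this]
    have h1 : MeasurableSet {t : ℝ | t ≤ cdf μ x} := measurableSet_Iic
    exact ((measurableSet_Iic.union hEmeas).union
      ((measurableSet_Ioi.inter hEmeas.compl).inter h1))
  · have : quant μ ⁻¹' Iic x = Ioi 0 ∩ Eᶜ ∩ {t | t ≤ cdf μ x} := by
      ext t
      simp only [mem_preimage, mem_Iic, mem_inter_iff, mem_Ioi, mem_compl_iff,
        mem_setOf_eq, hE, not_not]
      constructor
      · intro h
        by_cases h0 : t ≤ 0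
        · exact absurd (le_trans (by rw [quant_of_nonpos μ h0]) h) hx
        by_cases hne : {y : ℝ | t ≤ cdf μ y}.Nonempty
        · exact ⟨⟨not_le.1 h0, hne⟩, (quant_le_iff μ (not_le.1 h0) hne).1 h⟩
        · exact absurd (le_trans (by rw [quant_of_empty μ hne]) h) hx
      · rintro ⟨⟨h0, hne⟩, hle⟩
        exact (quant_le_iff μ h0 hne).2 hle
    rw [this]
    exact (measurableSet_Ioi.inter hEmeas.compl).inter measurableSet_Iic

lemma map_quant : (volume.restrict (Icc (0:ℝ) 1)).map (quant μ) = μ := by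
  haveI : IsProbabilityMeasure ((volume.restrict (Icc (0:ℝ) 1)).map (quant μ)) := by
    constructor
    rw [Measure.map_apply (measurable_quant μ) MeasurableSet.univ, preimage_univ,
      Measure.restrict_apply MeasurableSet.univ, univ_inter, Real.volume_Icc]
    norm_num
  refine Measure.ext_of_Iic _ _ (fun x => ?_)
  rw [Measure.map_apply (measurable_quant μ) measurableSet_Iic,
    Measure.restrict_apply (measurable_quant μ measurableSet_Iic)]
  have hkey : volume (quant μ ⁻¹' Iic x ∩ Icc (0:ℝ) 1) = volume (Ioc (0:ℝ) (cdf μ x)) := by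
    have hsub1 : Ioc (0:ℝ) (cdf μ x) ⊆ quant μ ⁻¹' Iic x ∩ Icc (0:ℝ) 1 := by
      intro t ht
      have ht0 : 0 < t := ht.1
      have htc : t ≤ cdf μ x := ht.2
      have hne : {y : ℝ | t ≤ cdf μ y}.Nonempty := ⟨x, htc⟩
      refine ⟨(quant_le_iff μ ht0 hne).2 htc, ht0.le, htc.trans (cdf_le_one μ x)⟩
    have hsub2 : quant μ ⁻¹' Iic x ∩ Icc (0:ℝ) 1 ⊆ Ioc (0:ℝ) (cdf μ x) ∪ {0, 1} := by
      rintro t ⟨hq, ht0, ht1⟩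
      rcases eq_or_lt_of_le ht0 with h0 | h0
      · exact Or.inr (Or.inl h0.symm)
      by_cases hne : {y : ℝ | t ≤ cdf μ y}.Nonempty
      · exact Or.inl ⟨h0, (quant_le_iff μ h0 hne).1 hq⟩
      · -- S_t empty implies t = 1
        rcases eq_or_lt_of_le ht1 with h1 | h1
        · exact Or.inr (Or.inr (by simp [h1]))
        · exact absurd (nonempty_S μ h1) hne
    refine le_antisymm ?_ (measure_mono hsub1)
    calc volume (quant μ ⁻¹' Iic x ∩ Icc (0:ℝ) 1)
        ≤ volume (Ioc (0:ℝ) (cdf μ x) ∪ {0, 1}) := measure_mono hsub2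
      _ ≤ volume (Ioc (0:ℝ) (cdf μ x)) + volume ({0, 1} : Set ℝ) := measure_union_le _ _
      _ = volume (Ioc (0:ℝ) (cdf μ x)) := by
          have h01 : volume ({0, 1} : Set ℝ) = 0 :=
            Set.Finite.measure_zero (Set.toFinite _) volume
          rw [h01, add_zero]
  rw [hkey, Real.volume_Ioc, sub_zero, ofReal_cdf μ x]

/-- A real quantile parameter on the unit interval subtype. -/
lemma exists_param_real (μ : Measure ℝ) [IsProbabilityMeasure μ] :
    ∃ Q : Set.Icc (0:ℝ) 1 → ℝ, Measurable Q ∧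
      (volume : Measure (Set.Icc (0:ℝ) 1)).map Q = μ := by
  refine ⟨quant μ ∘ Subtype.val, (measurable_quant μ).comp measurable_subtype_coe, ?_⟩
  have hemb : MeasurableEmbedding (Subtype.val : Set.Icc (0:ℝ) 1 → ℝ) :=
    MeasurableEmbedding.subtype_coe measurableSet_Icc
  rw [← Measure.map_map (measurable_quant μ) measurable_subtype_coe]
  have : (volume : Measure (Set.Icc (0:ℝ) 1)).map Subtype.val
      = volume.restrict (Icc (0:ℝ) 1) := by
    rw [show (volume : Measure (Set.Icc (0:ℝ) 1)) = volume.comap Subtype.val from rfl,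
      hemb.map_comap, Subtype.range_coe]
  rw [this, map_quant]

lemma map_eq_of_map_embedding_eq {α β : Type*} [MeasurableSpace α] [MeasurableSpace β]
    {j : α → β} (hj : MeasurableEmbedding j) {κ₁ κ₂ : Measure α}
    (h : κ₁.map j = κ₂.map j) : κ₁ = κ₂ := by
  ext A hA
  have h1 := hj.map_apply κ₁ (j '' A)
  have h2 := hj.map_apply κ₂ (j '' A)
  rw [h] at h1
  rw [hj.injective.preimage_image] at h1 h2
  rw [← h2, h1]

/-- Every Borel probability measure on a standard Borel space has a parameter. -/
lemma exists_param {α : Type*} [MeasurableSpace α] [StandardBorelSpace α] [Nonempty α]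
    (μ : Measure α) [IsProbabilityMeasure μ] :
    ∃ φ : Set.Icc (0:ℝ) 1 → α, Measurable φ ∧
      (volume : Measure (Set.Icc (0:ℝ) 1)).map φ = μ := by
  classical
  obtain ⟨s, hs, ⟨e⟩⟩ := exists_subset_real_measurableEquiv (α := α)
  have hvemb : MeasurableEmbedding (Subtype.val : s → ℝ) :=
    MeasurableEmbedding.subtype_coe hs
  set j : α → ℝ := fun a => (e a : ℝ) with hj_def
  have hj : MeasurableEmbedding j := hvemb.comp e.measurableEmbedding
  set μ' : Measure ℝ := μ.map j with hμ'
  haveI : IsProbabilityMeasure μ' := Measure.isProbabilityMeasure_map hj.measurable.aemeasurable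
  obtain ⟨Q, hQm, hQmap⟩ := exists_param_real μ'
  obtain ⟨z₀⟩ := ‹Nonempty α›
  set f : Set.Icc (0:ℝ) 1 → ℝ := fun t => if Q t ∈ s then Q t else (e z₀ : ℝ) with hf_def
  have hfm : Measurable f := Measurable.ite (hQm hs) hQm measurable_const
  have hfs : ∀ t, f t ∈ s := by
    intro t
    by_cases h : Q t ∈ s
    · simpa [hf_def, h]
    · simpa [hf_def, h] using (e z₀).2
  set φ : Set.Icc (0:ℝ) 1 → α := fun t => e.symm ⟨f t, hfs t⟩ with hφ_def
  have hφm : Measurable φ := e.symm.measurable.comp (hfm.subtype_mk)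
  refine ⟨φ, hφm, ?_⟩
  -- a.e. equality of f and Q
  have hnull : volume {t : Set.Icc (0:ℝ) 1 | Q t ∉ s} = 0 := by
    have : {t : Set.Icc (0:ℝ) 1 | Q t ∉ s} = Q ⁻¹' sᶜ := rfl
    rw [this, ← Measure.map_apply hQm hs.compl, hQmap]
    have hμs : μ' s = 1 := by
      rw [hμ', Measure.map_apply hj.measurable hs]
      have : j ⁻¹' s = univ := eq_univ_of_forall fun a => (e a).2
      rw [this, measure_univ]
    rw [measure_compl hs (measure_ne_top _ _), hμs, measure_univ, tsub_self]
  have hae : (fun t => f t) =ᵐ[(volume : Measure (Set.Icc (0:ℝ) 1))] Q := by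
    refine measure_mono_null ?_ hnull
    intro t ht
    simp only [mem_setOf_eq]
    intro hmem
    exact ht (by simp [hf_def, hmem])
  apply map_eq_of_map_embedding_eq hj
  rw [Measure.map_map hj.measurable hφm]
  have hjφ : j ∘ φ = f := by
    funext t
    simp [hj_def, hφ_def]
  rw [hjφ, Measure.map_congr hae, hQmap]

lemma kyFan_map_eq {Ω Ω' : Type*} [MeasurableSpace Ω] [MeasurableSpace Ω']
    (π : Measure Ω) (Θ : Ω → Ω') (hΘ : Measurable Θ) {u v : Ω' → ℝ}
    (hu : Measurable u) (hv : Measurable v) :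
    kyFan (π.map Θ) u v = kyFan π (u ∘ Θ) (v ∘ Θ) := by
  unfold kyFan
  congr 1
  ext ε
  have hset : MeasurableSet {ω' : Ω' | ε < edist (u ω') (v ω')} := by
    have h : Measurable fun ω' => edist (u ω') (v ω') := hu.edist hv
    exact h measurableSet_Ioi
  simp only [mem_setOf_eq]
  rw [Measure.map_apply hΘ hset]
  rfl

lemma hausd_image_eq {ι κ A B : Type*} (d₁ : A → A → ℝ≥0∞) (d₂ : B → B → ℝ≥0∞)
    (F : Set ι) (G : Set κ) (m₁ : ι → A) (n₁ : κ → A) (m₂ : ι → B) (n₂ : κ → B)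
    (h : ∀ f ∈ F, ∀ g ∈ G, d₁ (m₁ f) (n₁ g) = d₂ (m₂ f) (n₂ g)) :
    hausd d₁ (m₁ '' F) (n₁ '' G) = hausd d₂ (m₂ '' F) (n₂ '' G) := by
  unfold hausd
  congr 1
  · calc (⨆ a : ↥(m₁ '' F), ⨅ b : ↥(n₁ '' G), d₁ a b)
        = ⨆ a ∈ m₁ '' F, ⨅ b ∈ n₁ '' G, d₁ a b := by
          rw [iSup_subtype]; congr 1; ext a; congr 1; ext ha; rw [iInf_subtype]
      _ = ⨆ f ∈ F, ⨅ g ∈ G, d₁ (m₁ f) (n₁ g) := by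
          rw [iSup_image]; congr 1; ext f; congr 1; ext hf; rw [iInf_image]
      _ = ⨆ f ∈ F, ⨅ g ∈ G, d₂ (m₂ f) (n₂ g) := by
          exact biSup_congr fun f hf => biInf_congr fun g hg => h f hf g hg
      _ = ⨆ a ∈ m₂ '' F, ⨅ b ∈ n₂ '' G, d₂ a b := by
          rw [iSup_image]; congr 1; ext f; congr 1; ext hf; rw [iInf_image]
      _ = ⨆ a : ↥(m₂ '' F), ⨅ b : ↥(n₂ '' G), d₂ a b := by
          rw [iSup_subtype]; congr 1; ext a; congr 1; ext ha; rw [iInf_subtype]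
  · calc (⨆ b : ↥(n₁ '' G), ⨅ a : ↥(m₁ '' F), d₁ a b)
        = ⨆ b ∈ n₁ '' G, ⨅ a ∈ m₁ '' F, d₁ a b := by
          rw [iSup_subtype]; congr 1; ext b; congr 1; ext hb; rw [iInf_subtype]
      _ = ⨆ g ∈ G, ⨅ f ∈ F, d₁ (m₁ f) (n₁ g) := by
          rw [iSup_image]; congr 1; ext g; congr 1; ext hg; rw [iInf_image]
      _ = ⨆ g ∈ G, ⨅ f ∈ F, d₂ (m₂ f) (n₂ g) := by
          exact biSup_congr fun g hg => biInf_congr fun f hf => h f hf g hg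
      _ = ⨆ b ∈ n₂ '' G, ⨅ a ∈ m₂ '' F, d₂ a b := by
          rw [iSup_image]; congr 1; ext g; congr 1; ext hg; rw [iInf_image]
      _ = ⨆ b : ↥(n₂ '' G), ⨅ a : ↥(m₂ '' F), d₂ a b := by
          rw [iSup_subtype]; congr 1; ext b; congr 1; ext hb; rw [iInf_subtype]


lemma feat_measurable (X : GDS) {f : X.carrier → ℝ} (hf : f ∈ X.F) : Measurable f := by
  have hub : ∀ x y, |f x - f y| ≤ dist x y := fun x y =>
    (X.dist_isLUB x y).1 ⟨f, hf, rfl⟩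
  have hl : LipschitzWith 1 f := by
    apply LipschitzWith.of_dist_le_mul
    intro x y
    rw [Real.dist_eq, NNReal.coe_one, one_mul]
    exact hub x y
  exact hl.continuous.measurable

lemma gds_nonempty (X : GDS) : Nonempty X.carrier := by
  rcases isEmpty_or_nonempty X.carrier with h | h
  · have h0 : X.μ Set.univ = 0 := by
      rw [Set.univ_eq_empty_iff.2 h, measure_empty]
    rw [measure_univ] at h0
    exact absurd h0 one_ne_zero
  · exact h

end DConcAux
end DConcAuxSec

/-- If a feature space `(Z, F_Z)` with a Borel probability measure `ν`
maps onto `X` and `Y` compatibly with features and measures, then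
`d_conc(X,Y) ≤ H_{d_KF^ν}(F_X ∘ φ, F_Y ∘ ψ)`. -/
theorem dConc_le_hausd_of_featureSpace (X Y : GDS) (Z : Type) [MetricSpace Z]
    [MeasurableSpace Z] [BorelSpace Z]
    (FZ : Set (Z → ℝ)) (hFZne : FZ.Nonempty)
    (hFZ : ∀ z w : Z, IsLUB ((fun f => |f z - f w|) '' FZ) (dist z w))
    (ν : Measure Z) [IsProbabilityMeasure ν]
    (φ : Z → X.carrier) (ψ : Z → Y.carrier)
    (hφm : Measurable φ) (hψm : Measurable ψ)
    (hφF : (· ∘ φ) '' X.F ⊆ FZ) (hψF : (· ∘ ψ) '' Y.F ⊆ FZ)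
    (hφν : ν.map φ = X.μ) (hψν : ν.map ψ = Y.μ) :
    dConc X Y ≤ hausd (kyFan ν) ((· ∘ φ) '' X.F) ((· ∘ ψ) '' Y.F) := by
  classical
  haveI : Nonempty X.carrier := DConcAux.gds_nonempty X
  haveI : Nonempty Y.carrier := DConcAux.gds_nonempty Y
  haveI : Nonempty (X.carrier × Y.carrier) := inferInstance
  set pair : Z → X.carrier × Y.carrier := fun z => (φ z, ψ z) with hpair_def
  have hpairm : Measurable pair := hφm.prodMk hψm
  set ν' : Measure (X.carrier × Y.carrier) := ν.map pair with hν'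
  haveI : IsProbabilityMeasure ν' := Measure.isProbabilityMeasure_map hpairm.aemeasurable
  obtain ⟨Θ, hΘm, hΘmap⟩ := DConcAux.exists_param ν'
  set φ' : Set.Icc (0:ℝ) 1 → X.carrier := fun t => (Θ t).1 with hφ'_def
  set ψ' : Set.Icc (0:ℝ) 1 → Y.carrier := fun t => (Θ t).2 with hψ'_def
  have hφ'p : IsParam X.μ φ' := by
    refine ⟨measurable_fst.comp hΘm, ?_⟩
    rw [show φ' = Prod.fst ∘ Θ from rfl, ← Measure.map_map measurable_fst hΘm, hΘmap, hν',
      Measure.map_map measurable_fst hpairm]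
    exact hφν
  have hψ'p : IsParam Y.μ ψ' := by
    refine ⟨measurable_snd.comp hΘm, ?_⟩
    rw [show ψ' = Prod.snd ∘ Θ from rfl, ← Measure.map_map measurable_snd hΘm, hΘmap, hν',
      Measure.map_map measurable_snd hpairm]
    exact hψν
  have hkey : ∀ f ∈ X.F, ∀ g ∈ Y.F,
      kyFan (volume : Measure (Set.Icc (0:ℝ) 1)) (f ∘ φ') (g ∘ ψ')
        = kyFan ν (f ∘ φ) (g ∘ ψ) := by
    intro f hf g hg
    have hfm : Measurable f := DConcAux.feat_measurable X hf
    have hgm : Measurable g := DConcAux.feat_measurable Y hg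
    have hu : Measurable fun p : X.carrier × Y.carrier => f p.1 := hfm.comp measurable_fst
    have hv : Measurable fun p : X.carrier × Y.carrier => g p.2 := hgm.comp measurable_snd
    calc kyFan (volume : Measure (Set.Icc (0:ℝ) 1)) (f ∘ φ') (g ∘ ψ')
        = kyFan (volume : Measure (Set.Icc (0:ℝ) 1))
            ((fun p : X.carrier × Y.carrier => f p.1) ∘ Θ)
            ((fun p : X.carrier × Y.carrier => g p.2) ∘ Θ) := rfl
      _ = kyFan ((volume : Measure (Set.Icc (0:ℝ) 1)).map Θ)
            (fun p : X.carrier × Y.carrier => f p.1)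
            (fun p : X.carrier × Y.carrier => g p.2) :=
          (DConcAux.kyFan_map_eq _ Θ hΘm hu hv).symm
      _ = kyFan ν' (fun p : X.carrier × Y.carrier => f p.1)
            (fun p : X.carrier × Y.carrier => g p.2) := by rw [hΘmap]
      _ = kyFan ν ((fun p : X.carrier × Y.carrier => f p.1) ∘ pair)
            ((fun p : X.carrier × Y.carrier => g p.2) ∘ pair) :=
          DConcAux.kyFan_map_eq ν pair hpairm hu hv
      _ = kyFan ν (f ∘ φ) (g ∘ ψ) := rfl
  have heq : hausd (kyFan (volume : Measure (Set.Icc (0:ℝ) 1)))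
      ((· ∘ φ') '' X.F) ((· ∘ ψ') '' Y.F)
      = hausd (kyFan ν) ((· ∘ φ) '' X.F) ((· ∘ ψ) '' Y.F) :=
    DConcAux.hausd_image_eq _ _ X.F Y.F _ _ _ _ hkey
  calc dConc X Y
      ≤ hausd (kyFan (volume : Measure (Set.Icc (0:ℝ) 1)))
          ((· ∘ φ') '' X.F) ((· ∘ ψ') '' Y.F) :=
        iInf_le_of_le φ' (iInf_le_of_le hφ'p (iInf_le_of_le ψ' (iInf_le_of_le hψ'p le_rfl)))
    _ = hausd (kyFan ν) ((· ∘ φ) '' X.F) ((· ∘ ψ) '' Y.F) := heq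
end
end

section
/- For any two geometric data sets X and Y, the observable distance is bounded above by the box distance: d_conc(X,Y) ≤ □(X,Y). -/
open MeasureTheory Topology Filter ENNReal

noncomputable section

/-! ### Auxiliary lemmas -/

section Aux

open Set ProbabilityTheory

/-- Inverse transform sampling: every probability measure on `ℝ` has a parameter. -/
lemma exists_param_real (μ : Measure ℝ) [IsProbabilityMeasure μ] :
    ∃ q : Set.Icc (0:ℝ) 1 → ℝ, IsParam μ q := by
  set c : ℝ → ℝ := ⇑(cdf μ) with hc
  set Q : ℝ → ℝ := fun t => sInf {y | t ≤ c y} with hQdef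
  have hmono : Monotone c := monotone_cdf μ
  -- key equivalence for the quantile function
  have key : ∀ t : ℝ, 0 < t → t < 1 → ∀ x : ℝ, (Q t ≤ x ↔ t ≤ c x) := by
    intro t ht0 ht1 x
    have hne : {y | t ≤ c y}.Nonempty := by
      obtain ⟨y, hy⟩ := ((tendsto_cdf_atTop μ).eventually (eventually_ge_nhds ht1)).exists
      exact ⟨y, hy⟩
    have hbdd : BddBelow {y | t ≤ c y} := by
      obtain ⟨B, hB⟩ := Filter.eventually_atBot.mp
        ((tendsto_cdf_atBot μ).eventually (eventually_lt_nhds ht0))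
      exact ⟨B, fun z hz => le_of_not_gt fun h => absurd hz (not_le.mpr (hB z h.le))⟩
    constructor
    · intro h
      have h1 : t ≤ c (Q t) := by
        have hev : ∀ᶠ y in 𝓝[>] (Q t), t ≤ c y := by
          filter_upwards [self_mem_nhdsWithin] with y hy
          obtain ⟨z, hz, hzy⟩ := exists_lt_of_csInf_lt hne hy
          exact le_trans hz (hmono hzy.le)
        have htd : Filter.Tendsto c (𝓝[>] (Q t)) (𝓝 (c (Q t))) :=
          ((cdf μ).right_continuous (Q t)).mono_left
            (nhdsWithin_mono _ Set.Ioi_subset_Ici_self)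
        exact ge_of_tendsto htd hev
      exact h1.trans (hmono h)
    · intro h
      exact csInf_le hbdd h
  set q : Set.Icc (0:ℝ) 1 → ℝ := fun t => Q ↑t with hqdef
  set A : ℝ → Set ℝ := fun x => Subtype.val '' {t : Set.Icc (0:ℝ) 1 | Q ↑t ≤ x} with hAdef
  have hAmem : ∀ x r, r ∈ A x ↔ r ∈ Set.Icc (0:ℝ) 1 ∧ Q r ≤ x := by
    intro x r
    constructor
    · rintro ⟨⟨s, hs⟩, h1, rfl⟩; exact ⟨hs, h1⟩
    · rintro ⟨h1, h2⟩; exact ⟨⟨r, h1⟩, h2, rfl⟩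
  have hsub : ∀ x, A x \ ({0, 1} : Set ℝ) = Set.Ioc 0 (c x) \ ({0, 1} : Set ℝ) := by
    intro x
    ext r
    simp only [Set.mem_diff, Set.mem_insert_iff, Set.mem_singleton_iff, not_or]
    constructor
    · rintro ⟨hr, hr0, hr1⟩
      obtain ⟨⟨hge, hle⟩, hQr⟩ := (hAmem x r).mp hr
      have h0 : 0 < r := lt_of_le_of_ne hge (Ne.symm hr0)
      have h1 : r < 1 := lt_of_le_of_ne hle hr1
      exact ⟨⟨h0, (key r h0 h1 x).mp hQr⟩, hr0, hr1⟩
    · rintro ⟨⟨h0, hcx⟩, hr0, hr1⟩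
      have h1 : r < 1 := lt_of_le_of_ne (hcx.trans (cdf_le_one μ x)) hr1
      exact ⟨(hAmem x r).mpr ⟨⟨h0.le, h1.le⟩, (key r h0 h1 x).mpr hcx⟩, hr0, hr1⟩
  have h01c : ({0, 1} : Set ℝ).Countable := ((Set.finite_singleton (1:ℝ)).insert 0).countable
  have hA01 : ∀ x, A x = (Set.Ioc 0 (c x) \ ({0, 1} : Set ℝ)) ∪ (A x ∩ ({0, 1} : Set ℝ)) := by
    intro x
    conv_lhs => rw [← Set.diff_union_inter (A x) ({0, 1} : Set ℝ)]
    rw [hsub x]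
  have hAmeas : ∀ x, MeasurableSet (A x) := by
    intro x
    rw [hA01 x]
    exact (measurableSet_Ioc.diff h01c.measurableSet).union
      ((h01c.mono Set.inter_subset_right).measurableSet)
  have hAvol : ∀ x, volume (A x) = ENNReal.ofReal (c x) := by
    intro x
    have h01z : volume ({0, 1} : Set ℝ) = 0 := h01c.measure_zero _
    rw [← measure_diff_null (s := A x) h01z, hsub x, measure_diff_null h01z,
      Real.volume_Ioc, sub_zero]
  have hpre : ∀ x, q ⁻¹' Set.Iic x = Subtype.val ⁻¹' (A x) := by
    intro x
    rw [hAdef]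
    rw [Set.preimage_image_eq _ Subtype.val_injective]
    rfl
  have hq : Measurable q := by
    apply measurable_of_Iic
    intro x
    rw [hpre x]
    exact measurable_subtype_coe (hAmeas x)
  refine ⟨q, hq, ?_⟩
  haveI : IsProbabilityMeasure (Measure.map q volume) :=
    Measure.isProbabilityMeasure_map hq.aemeasurable
  refine Measure.ext_of_Iic _ _ (fun x => ?_)
  rw [Measure.map_apply hq measurableSet_Iic, hpre x]
  have hvc : (volume : Measure (Set.Icc (0:ℝ) 1)) = Measure.comap Subtype.val volume := rfl
  rw [hvc, (MeasurableEmbedding.subtype_coe measurableSet_Icc).comap_apply,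
    Subtype.image_preimage_coe,
    Set.inter_eq_self_of_subset_right (fun r hr => ((hAmem x r).mp hr).1),
    hAvol x, ofReal_cdf]

/-- Every probability measure on a nonempty standard Borel space has a parameter. -/
lemma exists_param_sb {Z : Type*} [MeasurableSpace Z] [StandardBorelSpace Z] [Nonempty Z]
    (π : Measure Z) [IsProbabilityMeasure π] :
    ∃ φ : Set.Icc (0:ℝ) 1 → Z, Measurable φ ∧ Measure.map φ volume = π := by
  classical
  obtain ⟨e, he⟩ := MeasureTheory.exists_measurableEmbedding_real Z
  set ν : Measure ℝ := Measure.map e π with hν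
  haveI : IsProbabilityMeasure ν := Measure.isProbabilityMeasure_map he.measurable.aemeasurable
  obtain ⟨q, hqm, hqmap⟩ := exists_param_real ν
  set g : ℝ → Z := fun r =>
    if h : r ∈ Set.range e then Set.rangeSplitting e ⟨r, h⟩ else Classical.arbitrary Z with hg
  have hgm : Measurable g :=
    Measurable.dite he.measurable_rangeSplitting measurable_const he.measurableSet_range
  have hge : ∀ z, g (e z) = z := by
    intro z
    have hz : e z ∈ Set.range e := ⟨z, rfl⟩
    rw [hg]
    simp only [dif_pos hz]
    exact Set.rightInverse_rangeSplitting he.injective z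
  refine ⟨g ∘ q, hgm.comp hqm, ?_⟩
  rw [← Measure.map_map hgm hqm, hqmap, hν, Measure.map_map hgm he.measurable]
  have : g ∘ e = id := funext hge
  rw [this, Measure.map_id]

lemma GDS.nonempty' (X : GDS) : Nonempty X.carrier := by
  by_contra h
  have h1 : X.μ Set.univ = 1 := measure_univ
  rw [Set.univ_eq_empty_iff.mpr (not_nonempty_iff.mp h), measure_empty] at h1
  exact zero_ne_one h1

end Aux

/-- The observable distance is bounded above by the box distance. -/
theorem dConc_le_boxDist (X Y : GDS) : dConc X Y ≤ boxDist X Y := by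
  refine le_iInf₂ fun π hπ => le_iInf₂ fun S hS => ?_
  obtain ⟨hprob, hfst, hsnd⟩ := hπ
  haveI := hprob
  haveI : Nonempty X.carrier := X.nonempty'
  haveI : Nonempty Y.carrier := Y.nonempty'
  obtain ⟨φt, hφtm, hφtmap⟩ := exists_param_sb π
  set φ : Set.Icc (0:ℝ) 1 → X.carrier := Prod.fst ∘ φt with hφdef
  set ψ : Set.Icc (0:ℝ) 1 → Y.carrier := Prod.snd ∘ φt with hψdef
  have hφ : IsParam X.μ φ := ⟨measurable_fst.comp hφtm, by
    rw [hφdef, ← Measure.map_map measurable_fst hφtm, hφtmap, hfst]⟩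
  have hψ : IsParam Y.μ ψ := ⟨measurable_snd.comp hφtm, by
    rw [hψdef, ← Measure.map_map measurable_snd hφtm, hφtmap, hsnd]⟩
  have hdc : dConc X Y ≤ hausd (kyFan (volume : Measure (Set.Icc (0:ℝ) 1)))
      ((· ∘ φ) '' X.F) ((· ∘ ψ) '' Y.F) :=
    iInf₂_le_of_le φ hφ (iInf₂_le ψ hψ)
  refine hdc.trans ?_
  set M : ℝ≥0∞ := max (1 - π S)
    (hausd (dInfty S) ((· ∘ Prod.fst) '' X.F) ((· ∘ Prod.snd) '' Y.F)) with hM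
  have hMS : M ≤ boxS X Y π S X.F Y.F :=
    max_le_max le_rfl (le_mul_of_one_le_left zero_le one_le_two)
  refine le_trans ?_ hMS
  -- volume of the complement of the preimage of S
  have hT : MeasurableSet (φt ⁻¹' S) := hφtm hS.measurableSet
  have hTc : volume ((φt ⁻¹' S)ᶜ) ≤ 1 - π S := by
    rw [measure_compl hT (measure_ne_top _ _), measure_univ]
    have hTS : volume (φt ⁻¹' S) = π S := by
      rw [← hφtmap, Measure.map_apply hφtm hS.measurableSet]
    rw [hTS]
  -- key Ky Fan bound
  have keyky : ∀ (f : X.carrier → ℝ) (g : Y.carrier → ℝ) (ε : ℝ≥0∞),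
      dInfty S (f ∘ Prod.fst) (g ∘ Prod.snd) ≤ ε → (1 - π S) ≤ ε →
      kyFan (volume : Measure (Set.Icc (0:ℝ) 1)) (f ∘ φ) (g ∘ ψ) ≤ ε := by
    intro f g ε hd h1
    refine sInf_le ?_
    have hsubset : {ω : Set.Icc (0:ℝ) 1 | ε < edist ((f ∘ φ) ω) ((g ∘ ψ) ω)}
        ⊆ (φt ⁻¹' S)ᶜ := by
      intro t ht hmem
      have hle : edist ((f ∘ φ) t) ((g ∘ ψ) t) ≤ ε := by
        refine le_trans ?_ hd
        unfold dInfty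
        exact le_iSup_of_le (⟨φt t, hmem⟩ : S) le_rfl
      exact absurd hle (not_le.mpr ht)
    exact le_trans (measure_mono hsubset) (hTc.trans h1)
  -- bound the Ky Fan Hausdorff distance by M
  rw [hausd]
  refine max_le ?_ ?_
  · refine iSup_le ?_
    rintro ⟨a, ha⟩
    obtain ⟨f, hf, rfl⟩ := ha
    refine ENNReal.le_of_forall_pos_le_add fun δ hδ hMtop => ?_
    have hH : (⨅ b : ((· ∘ Prod.snd) '' Y.F : Set (X.carrier × Y.carrier → ℝ)),
        dInfty S (f ∘ Prod.fst) (b : X.carrier × Y.carrier → ℝ)) ≤ M := by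
      refine le_trans ?_ (le_max_right _ _)
      rw [hausd]
      refine le_trans ?_ (le_max_left _ _)
      exact le_iSup_of_le (⟨f ∘ Prod.fst, ⟨f, hf, rfl⟩⟩ :
        ((· ∘ Prod.fst) '' X.F : Set (X.carrier × Y.carrier → ℝ))) le_rfl
    have hlt : (⨅ b : ((· ∘ Prod.snd) '' Y.F : Set (X.carrier × Y.carrier → ℝ)),
        dInfty S (f ∘ Prod.fst) (b : X.carrier × Y.carrier → ℝ)) < M + δ :=
      lt_of_le_of_lt hH (ENNReal.lt_add_right hMtop.ne (by exact_mod_cast hδ.ne'))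
    obtain ⟨b, hb⟩ := iInf_lt_iff.mp hlt
    obtain ⟨g, hg, hgb⟩ := b.2
    refine iInf_le_of_le ⟨g ∘ ψ, ⟨g, hg, rfl⟩⟩ ?_
    refine keyky f g (M + δ) ?_ ((le_max_left _ _).trans le_self_add)
    have : dInfty S (f ∘ Prod.fst) (g ∘ Prod.snd) = dInfty S (f ∘ Prod.fst) ↑b := by rw [← hgb]
    rw [this]
    exact hb.le
  · refine iSup_le ?_
    rintro ⟨a, ha⟩
    obtain ⟨g, hg, rfl⟩ := ha
    refine ENNReal.le_of_forall_pos_le_add fun δ hδ hMtop => ?_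
    have hH : (⨅ b : ((· ∘ Prod.fst) '' X.F : Set (X.carrier × Y.carrier → ℝ)),
        dInfty S (b : X.carrier × Y.carrier → ℝ) (g ∘ Prod.snd)) ≤ M := by
      refine le_trans ?_ (le_max_right _ _)
      rw [hausd]
      refine le_trans ?_ (le_max_right _ _)
      exact le_iSup_of_le (⟨g ∘ Prod.snd, ⟨g, hg, rfl⟩⟩ :
        ((· ∘ Prod.snd) '' Y.F : Set (X.carrier × Y.carrier → ℝ))) le_rfl
    have hlt : (⨅ b : ((· ∘ Prod.fst) '' X.F : Set (X.carrier × Y.carrier → ℝ)),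
        dInfty S (b : X.carrier × Y.carrier → ℝ) (g ∘ Prod.snd)) < M + δ :=
      lt_of_le_of_lt hH (ENNReal.lt_add_right hMtop.ne (by exact_mod_cast hδ.ne'))
    obtain ⟨b, hb⟩ := iInf_lt_iff.mp hlt
    obtain ⟨f, hf, hfb⟩ := b.2
    refine iInf_le_of_le ⟨f ∘ φ, ⟨f, hf, rfl⟩⟩ ?_
    refine keyky f g (M + δ) ?_ ((le_max_left _ _).trans le_self_add)
    have : dInfty S (f ∘ Prod.fst) (g ∘ Prod.snd) = dInfty S ↑b (g ∘ Prod.snd) := by rw [← hfb]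
    rw [this]
    exact hb.le
end
end

section
/- Let X and Y be geometric data sets and π ∈ Π(μ_X, μ_Y) a coupling. Then dis π ≤ □_π(F_X, F_Y). -/
open MeasureTheory Topology Filter ENNReal

noncomputable section

lemma dInfty_comm {α β : Type*} [PseudoEMetricSpace β] (A : Set α) (u v : α → β) :
    dInfty A u v = dInfty A v u := by
  unfold dInfty
  simp_rw [edist_comm]

/-- Abstract one-sided bound: if every `a ∈ A` is within `H` of `B` in `d∞^S`,
then the LUB of `|a p - a q|` is at most `dB + 2 H.toReal`. -/
lemma aux_one_side {Z : Type*} (S : Set Z) (A B : Set (Z → ℝ)) (H : ℝ≥0∞) (hH : H ≠ ⊤)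
    (hAB : ∀ a ∈ A, (⨅ b : B, dInfty S a (b : Z → ℝ)) ≤ H)
    {p q : Z} (hp : p ∈ S) (hq : q ∈ S)
    (dB : ℝ) (hdB : ∀ b ∈ B, |b p - b q| ≤ dB)
    {dA : ℝ} (hdA : IsLUB ((fun f => |f p - f q|) '' A) dA) :
    dA ≤ dB + 2 * H.toReal := by
  apply _root_.le_of_forall_pos_le_add
  intro ε hε
  apply hdA.2
  rintro r ⟨f, hf, rfl⟩
  have hlt : (⨅ b : B, dInfty S f (b : Z → ℝ)) < H + ENNReal.ofReal (ε / 2) := by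
    refine lt_of_le_of_lt (hAB f hf) ?_
    exact ENNReal.lt_add_right hH (by positivity)
  obtain ⟨b, hb⟩ := iInf_lt_iff.mp hlt
  -- pointwise bound on S
  have hpt : ∀ z ∈ S, |f z - (b : Z → ℝ) z| ≤ H.toReal + ε / 2 := by
    intro z hz
    have h1 : edist (f z) ((b : Z → ℝ) z) ≤ H + ENNReal.ofReal (ε / 2) := by
      refine le_trans ?_ hb.le
      exact le_iSup (fun a : S => edist (f a) ((b : Z → ℝ) a)) ⟨z, hz⟩
    rw [edist_dist, Real.dist_eq] at h1
    have h2 : H + ENNReal.ofReal (ε / 2) = ENNReal.ofReal (H.toReal + ε / 2) := by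
      rw [ENNReal.ofReal_add ENNReal.toReal_nonneg (by positivity),
        ENNReal.ofReal_toReal hH]
    rw [h2] at h1
    exact (ENNReal.ofReal_le_ofReal_iff (by positivity)).mp h1
  have hBb : |(b : Z → ℝ) p - (b : Z → ℝ) q| ≤ dB := hdB _ b.2
  have hp' := hpt p hp
  have hq' := hpt q hq
  have c1 : |f p - f q| ≤ |f p - (b : Z → ℝ) q| + |(b : Z → ℝ) q - f q| :=
    abs_sub_le _ _ _
  have c2 : |f p - (b : Z → ℝ) q| ≤ |f p - (b : Z → ℝ) p|
      + |(b : Z → ℝ) p - (b : Z → ℝ) q| := abs_sub_le _ _ _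
  have hq'' : |(b : Z → ℝ) q - f q| ≤ H.toReal + ε / 2 := by
    rwa [abs_sub_comm]
  linarith
lemma iInf_le_hausd_left {α : Type*} (d : α → α → ℝ≥0∞) (A B : Set α)
    {a : α} (ha : a ∈ A) : (⨅ b : B, d a b) ≤ hausd d A B :=
  le_trans (le_iSup (fun a : A => ⨅ b : B, d a b) ⟨a, ha⟩) (le_max_left _ _)

lemma iInf_le_hausd_right {α : Type*} (d : α → α → ℝ≥0∞) (A B : Set α)
    {b : α} (hb : b ∈ B) : (⨅ a : A, d a b) ≤ hausd d A B :=
  le_trans (le_iSup (fun b : B => ⨅ a : A, d a b) ⟨b, hb⟩) (le_max_right _ _)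

lemma distortion_le_two_hausd (X Y : GDS) (S : Set (X.carrier × Y.carrier)) :
    distortion S ≤
      2 * hausd (dInfty S) ((· ∘ Prod.fst) '' X.F) ((· ∘ Prod.snd) '' Y.F) := by
  by_cases hH : hausd (dInfty S) ((· ∘ Prod.fst) '' X.F) ((· ∘ Prod.snd) '' Y.F) = ⊤
  · rw [hH]; simp
  refine iSup₂_le fun p q => ?_
  obtain ⟨p, hp⟩ := p
  obtain ⟨q, hq⟩ := q
  have h1 : dist p.1 q.1 ≤ dist p.2 q.2 +
      2 * (hausd (dInfty S) ((· ∘ Prod.fst) '' X.F) ((· ∘ Prod.snd) '' Y.F)).toReal := by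
    refine aux_one_side S ((· ∘ Prod.fst) '' X.F) ((· ∘ Prod.snd) '' Y.F) _ hH ?_ hp hq (dist p.2 q.2) ?_ ?_
    · rintro a ⟨f, hf, rfl⟩
      exact iInf_le_hausd_left (dInfty S) _ _ (Set.mem_image_of_mem _ hf)
    · rintro b ⟨g, hg, rfl⟩
      exact (Y.dist_isLUB p.2 q.2).1 (Set.mem_image_of_mem _ hg)
    · have h := X.dist_isLUB p.1 q.1
      rw [Set.image_image]
      exact h
  have h2 : dist p.2 q.2 ≤ dist p.1 q.1 +
      2 * (hausd (dInfty S) ((· ∘ Prod.fst) '' X.F) ((· ∘ Prod.snd) '' Y.F)).toReal := by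
    refine aux_one_side S ((· ∘ Prod.snd) '' Y.F) ((· ∘ Prod.fst) '' X.F) _ hH ?_ hp hq (dist p.1 q.1) ?_ ?_
    · rintro b ⟨g, hg, rfl⟩
      refine le_trans (le_of_eq (iInf_congr fun a => dInfty_comm _ _ _)) ?_
      exact iInf_le_hausd_right (dInfty S) _ _ (Set.mem_image_of_mem _ hg)
    · rintro a ⟨f, hf, rfl⟩
      exact (X.dist_isLUB p.1 q.1).1 (Set.mem_image_of_mem _ hf)
    · have h := Y.dist_isLUB p.2 q.2
      rw [Set.image_image]
      exact h
  have habs : |dist p.1 q.1 - dist p.2 q.2| ≤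
      2 * (hausd (dInfty S) ((· ∘ Prod.fst) '' X.F) ((· ∘ Prod.snd) '' Y.F)).toReal := by
    rw [abs_sub_le_iff]
    constructor <;> linarith
  rw [edist_dist, Real.dist_eq]
  calc ENNReal.ofReal |dist p.1 q.1 - dist p.2 q.2|
      ≤ ENNReal.ofReal (2 * (hausd (dInfty S) ((· ∘ Prod.fst) '' X.F)
          ((· ∘ Prod.snd) '' Y.F)).toReal) := ENNReal.ofReal_le_ofReal habs
    _ = 2 * hausd (dInfty S) ((· ∘ Prod.fst) '' X.F) ((· ∘ Prod.snd) '' Y.F) := by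
        rw [ENNReal.ofReal_mul (by norm_num), ENNReal.ofReal_toReal hH]
        norm_num
/-- For a coupling `π` of two geometric data sets,
`dis π ≤ □_π(F_X, F_Y)`. -/
theorem disCoupling_le_boxCoupling (X Y : GDS)
    (π : Measure (X.carrier × Y.carrier)) (hπ : X.Coupling Y π) :
    disCoupling X Y π ≤ boxCoupling X Y π X.F Y.F := by
  refine iInf_mono fun S => iInf_mono fun hS => ?_
  exact max_le_max le_rfl (distortion_le_two_hausd X Y S)
end
end
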